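/- arXiv:1212.5386 — 4 statements merged into one kernel-verified Lean document; each statement's English description precedes it below -/
import Mathlib

section
/- There is a constant C > 0 such that for all n ≥ 1, |E[(T_n − 2/n)^2] − 4/(3n^3)| ≤ C/n^4; equivalently, the second central moment of T_n satisfies E[(T_n − 2/n)^2] = (4/(3n^3))(1 + O(1/n)) as n → ∞. -/
open MeasureTheory ProbabilityTheory Filter Topology

set_option maxHeartbeats 1000000


lemma telescope_hasSum {f : ℕ → ℝ} (hmono : ∀ k, f (k + 1) ≤ f k)
    (h0 : Tendsto f atTop (𝓝 0)) :
    HasSum (fun k => f k - f (k + 1)) (f 0) := by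
  rw [hasSum_iff_tendsto_nat_of_nonneg (fun k => sub_nonneg.2 (hmono k))]
  have hs : ∀ N, ∑ i ∈ Finset.range N, (f i - f (i + 1)) = f 0 - f N :=
    fun N => Finset.sum_range_sub' f N
  simp only [hs]
  simpa using (tendsto_const_nhds (x := f 0)).sub h0

lemma telescope_pow_hasSum (n : ℕ) (hn : 1 ≤ n) (c : ℝ) (hc : 0 ≤ c) (p : ℕ) (hp : 1 ≤ p) :
    HasSum (fun k : ℕ => c / ((k : ℝ) + n) ^ p - c / ((k : ℝ) + 1 + n) ^ p)
      (c / (n : ℝ) ^ p) := by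
  have hn' : (1 : ℝ) ≤ (n : ℝ) := by exact_mod_cast hn
  have hx : ∀ k : ℕ, (0:ℝ) < (k : ℝ) + n := fun k => by
    have := Nat.cast_nonneg (α := ℝ) k; linarith
  have hmono : ∀ k : ℕ, c / (((k+1 : ℕ) : ℝ) + n) ^ p ≤ c / ((k : ℝ) + n) ^ p := by
    intro k
    have h1 := hx k
    push_cast
    gcongr <;> linarith
  have h0 : Tendsto (fun k : ℕ => c / ((k : ℝ) + n) ^ p) atTop (𝓝 0) := by
    have h1 : Tendsto (fun k : ℕ => ((k : ℝ) + n)) atTop atTop :=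
      tendsto_atTop_add_const_right _ _ tendsto_natCast_atTop_atTop
    have h2 : Tendsto (fun k : ℕ => ((k : ℝ) + n) ^ p) atTop atTop :=
      (tendsto_pow_atTop (by omega)).comp h1
    have h3 := h2.inv_tendsto_atTop
    have := h3.const_mul c
    simpa [div_eq_mul_inv] using this
  have := telescope_hasSum hmono h0
  simp only [Nat.cast_zero, zero_add] at this
  convert this using 2 with k
  push_cast
  ring_nf

lemma kingman_series (n : ℕ) (hn : 1 ≤ n) :
    HasSum (fun i : ℕ => if n+1 ≤ i then 2/((i:ℝ)*((i:ℝ)-1)) else 0) (2/n) ∧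
    ∃ V : ℝ, HasSum (fun i : ℕ => (if n+1 ≤ i then 2/((i:ℝ)*((i:ℝ)-1)) else 0)^2) V ∧
      |V - (4/3)/(n:ℝ)^3| ≤ 2/(n:ℝ)^4 := by
  set a : ℕ → ℝ := fun i => if n+1 ≤ i then 2/((i:ℝ)*((i:ℝ)-1)) else 0 with ha
  have hn' : (1:ℝ) ≤ n := by exact_mod_cast hn
  have hx : ∀ k : ℕ, (0:ℝ) < (k:ℝ) + n := fun k => by
    have := Nat.cast_nonneg (α := ℝ) k; linarith
  have hinj : Function.Injective (fun k : ℕ => k + (n+1)) := add_left_injective (n+1)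
  have hzero1 : ∀ x ∉ Set.range (fun k : ℕ => k + (n+1)), a x = 0 := by
    intro i hi
    have hni : ¬ (n+1 ≤ i) := by
      intro hle
      exact hi ⟨i - (n+1), by show i - (n+1) + (n+1) = i; omega⟩
    exact if_neg hni
  have hzero2 : ∀ x ∉ Set.range (fun k : ℕ => k + (n+1)), (fun i => a i ^ 2) x = 0 := by
    intro i hi
    simp only [hzero1 i hi]
    norm_num
  have hga : ∀ k : ℕ, a (k + (n+1)) = 2 / (((k:ℝ)+n) * ((k:ℝ)+n+1)) := by
    intro k
    have hcond : n + 1 ≤ k + (n+1) := by omega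
    rw [ha]
    simp only [hcond, if_true]
    push_cast
    rw [show ((k:ℝ)+((n:ℝ)+1)) * (((k:ℝ)+((n:ℝ)+1)) - 1) = ((k:ℝ)+n) * ((k:ℝ)+n+1) by ring]
  have h1 : HasSum (fun k : ℕ => a (k + (n+1))) (2/(n:ℝ)) := by
    have htel := telescope_pow_hasSum n hn 2 (by norm_num) 1 le_rfl
    have heq : (fun k : ℕ => a (k+(n+1)))
        = fun k : ℕ => 2/((k:ℝ)+n)^1 - 2/((k:ℝ)+1+n)^1 := by
      funext k
      rw [hga k]
      have h1k := hx k
      field_simp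
      ring
    rw [heq, show (2:ℝ)/n = 2/(n:ℝ)^1 by rw [pow_one]]
    exact htel
  have hMsum : HasSum a (2/(n:ℝ)) := (hinj.hasSum_iff hzero1).1 h1
  have hd := telescope_pow_hasSum n hn (4/3) (by norm_num) 3 (by norm_num)
  set b : ℕ → ℝ := fun k => a (k + (n+1)) ^ 2 with hb
  set d : ℕ → ℝ := fun k => (4/3)/((k:ℝ)+n)^3 - (4/3)/((k:ℝ)+1+n)^3 with hdd
  set e : ℕ → ℝ := fun k => d k - b k with he
  have heval : ∀ k, e k = (4/3) / (((k:ℝ)+n)^3 * ((k:ℝ)+n+1)^3) := by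
    intro k
    have h1k := hx k
    have h2k : (0:ℝ) < (k:ℝ)+n+1 := by linarith
    rw [he]
    simp only [hdd, hb]
    rw [hga k]
    field_simp
    ring
  have he_nonneg : ∀ k, 0 ≤ e k := fun k => by
    rw [heval]
    have h1k := hx k
    positivity
  have he_le : ∀ k, e k ≤ (2/3)/(n:ℝ)^4 * a (k+(n+1)) := by
    intro k
    rw [heval, hga]
    have h1k := hx k
    have h2k : (0:ℝ) < (k:ℝ)+n+1 := by linarith
    have hkn : (n:ℝ) ≤ (k:ℝ)+n := by
      have := Nat.cast_nonneg (α := ℝ) k; linarith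
    have hpos : (0:ℝ) < (n:ℝ) := by linarith
    have k1 : (n:ℝ)^2 ≤ ((k:ℝ)+n)^2 := by nlinarith
    have k3 : (n:ℝ)^2 ≤ ((k:ℝ)+n+1)^2 := by nlinarith
    have key : (n:ℝ)^4 ≤ ((k:ℝ)+n)^2 * ((k:ℝ)+n+1)^2 := by
      have := mul_le_mul k1 k3 (sq_nonneg (n:ℝ)) (sq_nonneg ((k:ℝ)+n))
      nlinarith
    rw [div_mul_div_comm, div_le_div_iff₀ (by positivity) (by positivity)]
    nlinarith [mul_le_mul_of_nonneg_left key (le_of_lt (mul_pos h1k h2k))]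
  have he_sum : Summable e :=
    Summable.of_nonneg_of_le he_nonneg he_le ((h1.mul_left ((2/3)/(n:ℝ)^4)).summable)
  have hb_has : HasSum b ((4/3)/(n:ℝ)^3 - ∑' k, e k) := by
    have hdsum : HasSum d ((4/3)/(n:ℝ)^3) := hd
    have hEe : HasSum e (∑' k, e k) := he_sum.hasSum
    have h2 := hdsum.sub hEe
    suffices hbe : b = fun k => d k - e k by rw [hbe]; exact h2
    funext k
    rw [he]
    ring
  have hVsum : HasSum (fun i => a i ^ 2) ((4/3)/(n:ℝ)^3 - ∑' k, e k) :=
    (hinj.hasSum_iff hzero2).1 hb_has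
  have hE_nonneg : (0:ℝ) ≤ ∑' k, e k := tsum_nonneg he_nonneg
  have hE_le : ∑' k, e k ≤ (2/3)/(n:ℝ)^4 * (2/n) := by
    have h2 := h1.mul_left ((2/3)/(n:ℝ)^4)
    calc ∑' k, e k ≤ ∑' k, (2/3)/(n:ℝ)^4 * a (k+(n+1)) := he_sum.tsum_le_tsum he_le h2.summable
    _ = (2/3)/(n:ℝ)^4 * (2/n) := h2.tsum_eq
  refine ⟨hMsum, _, hVsum, ?_⟩
  have habs : |((4/3)/(n:ℝ)^3 - ∑' k, e k) - (4/3)/(n:ℝ)^3| = ∑' k, e k := by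
    rw [show ((4/3)/(n:ℝ)^3 - ∑' k, e k) - (4/3)/(n:ℝ)^3 = -(∑' k, e k) by ring, abs_neg,
      abs_of_nonneg hE_nonneg]
  rw [habs]
  refine hE_le.trans ?_
  have hpos : (0:ℝ) < (n:ℝ) := by linarith
  rw [div_mul_div_comm, div_le_div_iff₀ (by positivity) (by positivity)]
  nlinarith [mul_nonneg (pow_pos hpos 4).le (by linarith : (0:ℝ) ≤ (n:ℝ) - 1), pow_pos hpos 4]

lemma exp_moment (p : ℕ) (hp : 1 ≤ p) :
    ∫⁻ x, ENNReal.ofReal (x ^ p) ∂(expMeasure 1) = ENNReal.ofReal (Nat.factorial p : ℝ) := by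
  have hm : Measurable (fun x : ℝ => ENNReal.ofReal (x ^ p)) :=
    ENNReal.measurable_ofReal.comp (measurable_id.pow_const p)
  have hpdf : Measurable (gammaPDF 1 1) :=
    ENNReal.measurable_ofReal.comp (measurable_gammaPDFReal 1 1)
  rw [expMeasure, gammaMeasure, lintegral_withDensity_eq_lintegral_mul _ hpdf hm]
  have hfun : ∫⁻ x, (gammaPDF 1 1 * fun x : ℝ => ENNReal.ofReal (x ^ p)) x ∂volume
      = ∫⁻ x, Set.indicator (Set.Ioi (0:ℝ)) (fun x => ENNReal.ofReal (Real.exp (-x) * x ^ p)) x ∂volume := by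
    refine lintegral_congr fun x => ?_
    have hgexp : gammaPDF 1 1 x = exponentialPDF 1 x := rfl
    simp only [Pi.mul_apply, hgexp, exponentialPDF_eq]
    by_cases hx : 0 < x
    · rw [Set.indicator_of_mem (Set.mem_Ioi.mpr hx), if_pos hx.le]
      rw [← ENNReal.ofReal_mul (by positivity)]
      norm_num
    · rw [Set.indicator_of_notMem (by simpa using hx)]
      push_neg at hx
      rcases lt_or_eq_of_le hx with h | h
      · rw [if_neg (by linarith)]
        simp
      · subst h
        rw [zero_pow (by omega : p ≠ 0)]
        simp
  rw [hfun, lintegral_indicator measurableSet_Ioi]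
  
  have hint : IntegrableOn (fun x => Real.exp (-x) * x ^ p) (Set.Ioi (0:ℝ)) := by
    have h := Real.GammaIntegral_convergent (s := (p:ℝ) + 1) (by positivity)
    refine h.congr_fun ?_ measurableSet_Ioi
    intro x hx
    simp only [show ((p:ℝ) + 1) - 1 = (p:ℝ) by ring, Real.rpow_natCast]
  have hnn : 0 ≤ᵐ[volume.restrict (Set.Ioi (0:ℝ))] fun x => Real.exp (-x) * x ^ p := by
    refine (ae_restrict_iff' measurableSet_Ioi).2 (ae_of_all _ fun x hx => ?_)
    have : (0:ℝ) < x := hx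
    positivity
  rw [← ofReal_integral_eq_lintegral_ofReal hint hnn]
  congr 1
  have hG : Real.Gamma ((p:ℝ) + 1) = ∫ x in Set.Ioi (0:ℝ), Real.exp (-x) * x ^ p := by
    rw [Real.Gamma_eq_integral (by positivity)]
    refine setIntegral_congr_fun measurableSet_Ioi fun x hx => ?_
    simp only [show ((p:ℝ) + 1) - 1 = (p:ℝ) by ring, Real.rpow_natCast]
  rw [← hG, Real.Gamma_nat_eq_factorial]

/-- The 2-th central moment of the Kingman coalescent time `T n` satisfies
`E[(T n − 2/n)^2] = (4/3/n^3)(1 + O(1/n))` as `n → ∞`. -/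
theorem kingman_Tn_central_moment_2
    {Ω : Type*} [MeasurableSpace Ω] (μ : Measure Ω) [IsProbabilityMeasure μ]
    (S : ℕ → Ω → ℝ)
    (hindep : iIndepFun
      (fun i : {i : ℕ // 2 ≤ i} => S i) μ)
    (hexp : ∀ i : ℕ, 2 ≤ i → μ.map (S i) = expMeasure 1)
    (T : ℕ → Ω → ℝ)
    (hT : ∀ n ω, T n ω
      = ∑' i : ℕ, if n + 1 ≤ i then 2 * S i ω / ((i : ℝ) * ((i : ℝ) - 1)) else 0) :
    ∃ C : ℝ, 0 < C ∧ ∀ n : ℕ, 1 ≤ n →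
      |(∫ ω, (T n ω - 2 / n) ^ 2 ∂μ) - (4/3) / (n : ℝ) ^ 3| ≤ C / (n : ℝ) ^ 4 := by
  -- measurability of the S i
  have hS : ∀ i : ℕ, 2 ≤ i → AEMeasurable (S i) μ := by
    intro i hi
    by_contra h
    have h0 := Measure.map_of_not_aemeasurable h
    rw [hexp i hi] at h0
    have : IsProbabilityMeasure (expMeasure 1) := isProbabilityMeasure_expMeasure one_pos
    exact IsProbabilityMeasure.ne_zero _ h0
  -- a.e. nonnegativity
  have hSnn : ∀ i : ℕ, 2 ≤ i → ∀ᵐ ω ∂μ, 0 ≤ S i ω := by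
    intro i hi
    have h0 : expMeasure 1 (Set.Iio 0) = 0 := by
      rw [expMeasure, gammaMeasure, withDensity_apply _ measurableSet_Iio]
      exact lintegral_gammaPDF_of_nonpos le_rfl
    have hmap := Measure.map_apply_of_aemeasurable (hS i hi) (measurableSet_Iio (a := (0:ℝ)))
    rw [hexp i hi, h0] at hmap
    rw [ae_iff]
    have hset : {ω | ¬ (0:ℝ) ≤ S i ω} = S i ⁻¹' (Set.Iio 0) := by
      ext ω; simp [not_le]
    rw [hset, ← hmap]
  -- moments
  have hmom : ∀ i : ℕ, 2 ≤ i → ∀ p : ℕ, 1 ≤ p →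
      ∫⁻ ω, ENNReal.ofReal (S i ω ^ p) ∂μ = ENNReal.ofReal (Nat.factorial p : ℝ) := by
    intro i hi p hp
    have hSm := hS i hi
    have hf : AEMeasurable (fun x : ℝ => ENNReal.ofReal (x ^ p)) (μ.map (S i)) :=
      (ENNReal.measurable_ofReal.comp (measurable_id.pow_const p)).aemeasurable
    rw [← lintegral_map' hf hSm, hexp i hi, exp_moment p hp]
  have E1 : ∀ i : ℕ, 2 ≤ i → ∫⁻ ω, ENNReal.ofReal (S i ω) ∂μ = 1 := by
    intro i hi
    have := hmom i hi 1 le_rfl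
    simpa using this
  have E2 : ∀ i : ℕ, 2 ≤ i →
      ∫⁻ ω, ENNReal.ofReal (S i ω) * ENNReal.ofReal (S i ω) ∂μ = 2 := by
    intro i hi
    have hcong : (fun ω => ENNReal.ofReal (S i ω) * ENNReal.ofReal (S i ω))
        =ᵐ[μ] fun ω => ENNReal.ofReal (S i ω ^ 2) := by
      filter_upwards [hSnn i hi] with ω hω
      rw [pow_two, ENNReal.ofReal_mul hω]
    rw [lintegral_congr_ae hcong, hmom i hi 2 (by norm_num)]
    norm_num
  have Eprod : ∀ i j : ℕ, 2 ≤ i → 2 ≤ j → i ≠ j →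
      ∫⁻ ω, ENNReal.ofReal (S i ω) * ENNReal.ofReal (S j ω) ∂μ = 1 := by
    intro i j hi hj hij
    have hne : (⟨i, hi⟩ : {i : ℕ // 2 ≤ i}) ≠ ⟨j, hj⟩ := by
      simp only [ne_eq, Subtype.mk.injEq]
      exact hij
    have hIF : IndepFun (S i) (S j) μ := hindep.indepFun hne
    have hIF2 : IndepFun (fun ω => ENNReal.ofReal (S i ω)) (fun ω => ENNReal.ofReal (S j ω)) μ :=
      hIF.comp ENNReal.measurable_ofReal ENNReal.measurable_ofReal
    have hmi : AEMeasurable (fun ω => ENNReal.ofReal (S i ω)) μ :=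
      ENNReal.measurable_ofReal.comp_aemeasurable (hS i hi)
    have hmj : AEMeasurable (fun ω => ENNReal.ofReal (S j ω)) μ :=
      ENNReal.measurable_ofReal.comp_aemeasurable (hS j hj)
    rw [lintegral_mul_eq_lintegral_mul_lintegral_of_indepFun'' hmi hmj hIF2,
      E1 i hi, E1 j hj, mul_one]
  refine ⟨2, by norm_num, fun n hn => ?_⟩
  have hn' : (1:ℝ) ≤ (n:ℝ) := by exact_mod_cast hn
  obtain ⟨hMsum, V, hVsum, hVbound⟩ := kingman_series n hn
  set a : ℕ → ℝ := fun i => if n+1 ≤ i then 2/((i:ℝ)*((i:ℝ)-1)) else 0 with ha_def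
  have ha_nonneg : ∀ i, 0 ≤ a i := by
    intro i
    rw [ha_def]
    dsimp only
    split
    · rename_i h
      have h2 : (2:ℝ) ≤ (i:ℝ) := by exact_mod_cast (by omega : 2 ≤ i)
      have : (0:ℝ) < (i:ℝ) * ((i:ℝ) - 1) := mul_pos (by linarith) (by linarith)
      positivity
    · exact le_rfl
  set F : ℕ → Ω → ENNReal := fun i ω => ENNReal.ofReal (a i * S i ω) with hF_def
  have hFm : ∀ i, AEMeasurable (F i) μ := by
    intro i
    by_cases hi : n + 1 ≤ i
    · exact ENNReal.measurable_ofReal.comp_aemeasurable ((hS i (by omega)).const_mul (a i))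
    · have hzero : F i = fun _ => 0 := by
        funext ω
        simp [hF_def, ha_def, hi, show ¬ n < i by omega]
      rw [hzero]
      exact aemeasurable_const
  have hFint : ∀ i, ∫⁻ ω, F i ω ∂μ = ENNReal.ofReal (a i) := by
    intro i
    by_cases hi : n + 1 ≤ i
    · have hi2 : 2 ≤ i := by omega
      have heq : ∀ ω, F i ω = ENNReal.ofReal (a i) * ENNReal.ofReal (S i ω) :=
        fun ω => ENNReal.ofReal_mul (ha_nonneg i)
      simp only [heq]
      rw [lintegral_const_mul' _ _ ENNReal.ofReal_ne_top, E1 i hi2, mul_one]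
    · have h0 : a i = 0 := if_neg hi
      simp [hF_def, h0]
  have hGint : ∫⁻ ω, ∑' i, F i ω ∂μ = ENNReal.ofReal (2/(n:ℝ)) := by
    rw [lintegral_tsum hFm]
    rw [tsum_congr hFint, ← ENNReal.ofReal_tsum_of_nonneg ha_nonneg hMsum.summable,
      hMsum.tsum_eq]
  have key : ∀ q : ℕ × ℕ, ∫⁻ ω, F q.1 ω * F q.2 ω ∂μ
      = ENNReal.ofReal (a q.1) * ENNReal.ofReal (a q.2) * (if q.1 = q.2 then 2 else 1) := by
    rintro ⟨i, j⟩
    dsimp only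
    by_cases hi : n + 1 ≤ i
    case neg =>
      have h0 : a i = 0 := if_neg hi
      simp [hF_def, h0]
    by_cases hj : n + 1 ≤ j
    case neg =>
      have h0 : a j = 0 := if_neg hj
      simp [hF_def, h0]
    have hi2 : 2 ≤ i := by omega
    have hj2 : 2 ≤ j := by omega
    have hsplit : ∀ ω, F i ω * F j ω = (ENNReal.ofReal (a i) * ENNReal.ofReal (a j))
        * (ENNReal.ofReal (S i ω) * ENNReal.ofReal (S j ω)) := by
      intro ω
      rw [hF_def]
      dsimp only
      rw [ENNReal.ofReal_mul (ha_nonneg i), ENNReal.ofReal_mul (ha_nonneg j)]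
      ring
    simp only [hsplit]
    rw [lintegral_const_mul' _ _ (ENNReal.mul_ne_top ENNReal.ofReal_ne_top ENNReal.ofReal_ne_top)]
    by_cases hij : i = j
    · subst hij
      rw [if_pos rfl, E2 i hi2]
    · rw [if_neg hij, Eprod i j hi2 hj2 hij, mul_one]
  have hV_nonneg : 0 ≤ V := hVsum.nonneg fun i => sq_nonneg _
  have hGsq : ∫⁻ ω, (∑' i, F i ω) * (∑' i, F i ω) ∂μ
      = ENNReal.ofReal ((2/(n:ℝ))^2) + ENNReal.ofReal V := by
    have hGG : ∀ ω, (∑' i, F i ω) * (∑' i, F i ω) = ∑' q : ℕ × ℕ, F q.1 ω * F q.2 ω := by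
      intro ω
      calc (∑' i, F i ω) * (∑' i, F i ω) = ∑' i, F i ω * (∑' j, F j ω) :=
            ENNReal.tsum_mul_right.symm
      _ = ∑' i, ∑' j, F i ω * F j ω := tsum_congr fun i => ENNReal.tsum_mul_left.symm
      _ = ∑' q : ℕ × ℕ, F q.1 ω * F q.2 ω := ENNReal.tsum_prod.symm
    simp only [hGG]
    rw [lintegral_tsum (f := fun (q : ℕ × ℕ) (ω : Ω) => F q.1 ω * F q.2 ω)
      (fun q => (hFm q.1).mul (hFm q.2))]
    rw [tsum_congr key]
    have hsplit2 : ∀ q : ℕ × ℕ,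
        ENNReal.ofReal (a q.1) * ENNReal.ofReal (a q.2) * (if q.1 = q.2 then 2 else 1)
        = ENNReal.ofReal (a q.1) * ENNReal.ofReal (a q.2)
          + (if q.1 = q.2 then ENNReal.ofReal (a q.1) * ENNReal.ofReal (a q.2) else 0) := by
      rintro ⟨i, j⟩
      by_cases h : i = j
      · subst h
        rw [if_pos rfl, if_pos rfl, mul_two]
      · simp [h]
    rw [tsum_congr hsplit2, ENNReal.tsum_add]
    congr 1
    · rw [ENNReal.tsum_prod (f := fun i j => ENNReal.ofReal (a i) * ENNReal.ofReal (a j))]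
      calc ∑' i, ∑' j, ENNReal.ofReal (a i) * ENNReal.ofReal (a j)
          = ∑' (i : ℕ), ENNReal.ofReal (a i) * ∑' j, ENNReal.ofReal (a j) :=
            tsum_congr fun i => ENNReal.tsum_mul_left
      _ = (∑' i, ENNReal.ofReal (a i)) * (∑' j, ENNReal.ofReal (a j)) :=
            ENNReal.tsum_mul_right
      _ = ENNReal.ofReal (2/(n:ℝ)) * ENNReal.ofReal (2/(n:ℝ)) := by
            rw [← ENNReal.ofReal_tsum_of_nonneg ha_nonneg hMsum.summable, hMsum.tsum_eq]
      _ = ENNReal.ofReal ((2/(n:ℝ))^2) := by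
            rw [← ENNReal.ofReal_mul (by positivity), pow_two]
    · have hginj : Function.Injective (fun i : ℕ => ((i, i) : ℕ × ℕ)) := by
        intro x y h
        exact (Prod.ext_iff.1 h).1
      have hsupp : (Function.support fun q : ℕ × ℕ =>
          if q.1 = q.2 then ENNReal.ofReal (a q.1) * ENNReal.ofReal (a q.2) else 0)
          ⊆ Set.range (fun i : ℕ => ((i, i) : ℕ × ℕ)) := by
        rintro ⟨i, j⟩ hq
        rcases eq_or_ne i j with h | h
        · exact ⟨i, by simp [h]⟩
        · exfalso
          apply hq
          simp [h]
      have hdiag := Function.Injective.tsum_eq hginj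
        (f := fun q : ℕ × ℕ => if q.1 = q.2 then ENNReal.ofReal (a q.1) * ENNReal.ofReal (a q.2) else 0)
        hsupp
      rw [← hdiag]
      simp only [if_pos rfl]
      calc ∑' i : ℕ, ENNReal.ofReal (a i) * ENNReal.ofReal (a i)
          = ∑' i : ℕ, ENNReal.ofReal (a i ^ 2) :=
            tsum_congr fun i => by rw [pow_two, ENNReal.ofReal_mul (ha_nonneg i)]
      _ = ENNReal.ofReal V := by
            rw [← ENNReal.ofReal_tsum_of_nonneg (fun i => sq_nonneg _) hVsum.summable,
              hVsum.tsum_eq]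
  -- a.e. identification of T n
  have hGm : AEMeasurable (fun ω => ∑' i, F i ω) μ := AEMeasurable.ennreal_tsum hFm
  have hGlt : ∀ᵐ ω ∂μ, (∑' i, F i ω) < ⊤ := by
    refine ae_lt_top' hGm ?_
    rw [hGint]
    exact ENNReal.ofReal_ne_top
  have hSnn_all : ∀ᵐ ω ∂μ, ∀ i : ℕ, 2 ≤ i → 0 ≤ S i ω := by
    rw [ae_all_iff]
    intro i
    by_cases hi : 2 ≤ i
    · exact (hSnn i hi).mono fun ω h _ => h
    · exact ae_of_all _ fun ω h => absurd h hi
  have hTG : T n =ᵐ[μ] fun ω => (∑' i, F i ω).toReal := by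
    filter_upwards [hSnn_all, hGlt] with ω hnn _
    have hterm : ∀ i : ℕ,
        (if n + 1 ≤ i then 2 * S i ω / ((i : ℝ) * ((i : ℝ) - 1)) else 0) = a i * S i ω := by
      intro i
      by_cases hi : n + 1 ≤ i
      · simp only [ha_def, if_pos hi]
        ring
      · simp [ha_def, hi, show ¬ n < i by omega]
    have hterm2 : ∀ i : ℕ, a i * S i ω = (F i ω).toReal := by
      intro i
      rw [hF_def]
      dsimp only
      rw [ENNReal.toReal_ofReal ?_]
      by_cases hi : n + 1 ≤ i
      · exact mul_nonneg (ha_nonneg i) (hnn i (by omega))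
      · have h0 : a i = 0 := if_neg hi
        rw [h0, zero_mul]
    rw [hT n ω]
    calc ∑' i : ℕ, (if n + 1 ≤ i then 2 * S i ω / ((i : ℝ) * ((i : ℝ) - 1)) else 0)
        = ∑' i : ℕ, (F i ω).toReal := tsum_congr fun i => (hterm i).trans (hterm2 i)
    _ = (∑' i, F i ω).toReal := (ENNReal.tsum_toReal_eq fun i => ENNReal.ofReal_ne_top).symm
  have hTnn : 0 ≤ᵐ[μ] T n := by
    filter_upwards [hTG] with ω h
    rw [h]
    exact ENNReal.toReal_nonneg
  have hofT : (fun ω => ENNReal.ofReal (T n ω)) =ᵐ[μ] fun ω => ∑' i, F i ω := by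
    filter_upwards [hTG, hGlt] with ω h hlt
    rw [h, ENNReal.ofReal_toReal hlt.ne]
  have hTm : AEMeasurable (T n) μ := (hGm.ennreal_toReal).congr hTG.symm
  have hTsm : AEStronglyMeasurable (T n) μ := hTm.aestronglyMeasurable
  have hsm2 : AEStronglyMeasurable (fun ω => (T n ω)^2) μ :=
    (hTm.pow_const 2).aestronglyMeasurable
  have hofT2 : (fun ω => ENNReal.ofReal ((T n ω)^2)) =ᵐ[μ] fun ω => (∑' i, F i ω) * (∑' i, F i ω) := by
    filter_upwards [hofT, hTnn] with ω h hnnω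
    rw [pow_two, ENNReal.ofReal_mul hnnω, h]
  have hIntT : ∫ ω, T n ω ∂μ = 2/(n:ℝ) := by
    rw [integral_eq_lintegral_of_nonneg_ae hTnn hTsm, lintegral_congr_ae hofT, hGint,
      ENNReal.toReal_ofReal (by positivity)]
  have hIntT2 : ∫ ω, (T n ω)^2 ∂μ = (2/(n:ℝ))^2 + V := by
    rw [integral_eq_lintegral_of_nonneg_ae (ae_of_all _ fun ω => sq_nonneg _) hsm2,
      lintegral_congr_ae hofT2, hGsq,
      ← ENNReal.ofReal_add (by positivity) hV_nonneg,
      ENNReal.toReal_ofReal (by positivity)]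
  have hTint : Integrable (T n) μ := by
    refine ⟨hTsm, ?_⟩
    rw [hasFiniteIntegral_iff_ofReal hTnn, lintegral_congr_ae hofT, hGint]
    exact ENNReal.ofReal_lt_top
  have hT2int : Integrable (fun ω => (T n ω)^2) μ := by
    refine ⟨hsm2, ?_⟩
    rw [hasFiniteIntegral_iff_ofReal (ae_of_all _ fun ω => sq_nonneg _),
      lintegral_congr_ae hofT2, hGsq]
    exact ENNReal.add_lt_top.2 ⟨ENNReal.ofReal_lt_top, ENNReal.ofReal_lt_top⟩
  have hfinal : ∫ ω, (T n ω - 2/(n:ℝ))^2 ∂μ = V := by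
    have hexpand : ∀ ω, (T n ω - 2/(n:ℝ))^2
        = ((T n ω)^2 - (4/(n:ℝ)) * T n ω) + (2/(n:ℝ))^2 := by
      intro ω
      ring
    rw [integral_congr_ae (ae_of_all _ hexpand)]
    have hadd : ∫ ω, (T n ω ^ 2 - 4 / (n:ℝ) * T n ω + (2/(n:ℝ))^2) ∂μ
        = (∫ ω, (T n ω ^ 2 - 4 / (n:ℝ) * T n ω) ∂μ) + ∫ _, ((2/(n:ℝ))^2 : ℝ) ∂μ :=
      integral_add (hT2int.sub (hTint.const_mul _)) (integrable_const _)
    have hsub : ∫ ω, (T n ω ^ 2 - 4 / (n:ℝ) * T n ω) ∂μ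
        = (∫ ω, T n ω ^ 2 ∂μ) - ∫ ω, 4 / (n:ℝ) * T n ω ∂μ :=
      integral_sub hT2int (hTint.const_mul _)
    rw [hadd, hsub, integral_const_mul, hIntT, hIntT2, integral_const]
    simp only [probReal_univ, measure_univ, ENNReal.toReal_one, one_smul, smul_eq_mul]
    ring
  rw [hfinal]
  exact hVbound
end

section
/- For every λ ≥ 0 and every n ≥ 1, the Laplace transform of T_n is given by the infinite product E[e^{−λ T_n}] = ∏_{i=n+1}^∞ C(i,2)/(C(i,2) + λ), where C(i,2) = i(i−1)/2. -/
open MeasureTheory ProbabilityTheory Filter Topology Set Real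

namespace KingmanAux

variable {Ω : Type*} [MeasurableSpace Ω] {μ : Measure Ω}

lemma iIndepFun_of_ae_eq {ι : Type*} {f g : ι → Ω → ℝ}
    (h : iIndepFun f μ) (hfg : ∀ i, f i =ᵐ[μ] g i) :
    iIndepFun g μ := by
  rw [iIndepFun_iff_measure_inter_preimage_eq_mul] at h ⊢
  intro s sets hsets
  have hae : ∀ᵐ ω ∂μ, ∀ i ∈ s, f i ω = g i ω :=
    (Filter.eventually_all_finset s).2 fun i _ => hfg i
  have h1 : ∀ i ∈ s, μ (g i ⁻¹' sets i) = μ (f i ⁻¹' sets i) := by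
    intro i hi
    apply measure_congr
    apply Filter.eventuallyEq_set.2
    filter_upwards [hfg i] with ω hω
    simp [Set.mem_preimage, hω]
  have h2 : μ (⋂ i ∈ s, g i ⁻¹' sets i) = μ (⋂ i ∈ s, f i ⁻¹' sets i) := by
    apply measure_congr
    apply Filter.eventuallyEq_set.2
    filter_upwards [hae] with ω hω
    simp only [Set.mem_iInter, Set.mem_preimage]
    exact ⟨fun H i hi => (hω i hi) ▸ H i hi, fun H i hi => (hω i hi).symm ▸ H i hi⟩
  rw [h2, h s hsets]
  exact (Finset.prod_congr rfl h1).symm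


lemma expMeasure_eq : expMeasure 1 = volume.withDensity (exponentialPDF 1) := rfl

lemma measurable_exponentialPDF : Measurable (exponentialPDF 1) :=
  (measurable_exponentialPDFReal 1).ennreal_ofReal

lemma intOn (b : ℝ) (hb : 0 < b) :
    IntegrableOn (fun x : ℝ => Real.exp (-(b * x))) (Ici 0) volume := by
  rw [integrableOn_Ici_iff_integrableOn_Ioi]
  simpa only [neg_mul] using exp_neg_integrableOn_Ioi 0 hb

lemma integral_exp_neg_mul_expMeasure {a : ℝ} (ha : 0 ≤ a) :
    ∫ x, Real.exp (-(a * x)) ∂(expMeasure 1) = 1 / (1 + a) := by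
  have hb : (0:ℝ) < 1 + a := by linarith
  have hcont : Continuous fun x : ℝ => Real.exp (-(a * x)) := by continuity
  rw [integral_eq_lintegral_of_nonneg_ae (Filter.Eventually.of_forall fun x => (Real.exp_pos _).le)
    hcont.aestronglyMeasurable]
  rw [expMeasure_eq, lintegral_withDensity_eq_lintegral_mul _ measurable_exponentialPDF
    (hcont.measurable.ennreal_ofReal)]
  have hpt : ∀ x : ℝ, (exponentialPDF 1 * fun x => ENNReal.ofReal (Real.exp (-(a * x)))) x
      = ENNReal.ofReal (Set.indicator (Ici 0) (fun x => Real.exp (-((1 + a) * x))) x) := by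
    intro x
    simp only [Pi.mul_apply, exponentialPDF_eq, Set.indicator_apply, mem_Ici]
    rw [← ENNReal.ofReal_mul (by positivity)]
    congr 1
    by_cases hx : 0 ≤ x
    · simp only [if_pos hx, one_mul, ← Real.exp_add]
      ring_nf
    · simp [if_neg hx]
  simp only [hpt]
  have hint : Integrable (Set.indicator (Ici 0) (fun x => Real.exp (-((1 + a) * x)))) volume := by
    rw [integrable_indicator_iff measurableSet_Ici]
    exact intOn _ hb
  rw [← ofReal_integral_eq_lintegral_ofReal hint (Filter.Eventually.of_forall fun x =>
    Set.indicator_nonneg (fun y _ => (Real.exp_pos _).le) x)]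
  rw [MeasureTheory.integral_indicator measurableSet_Ici, integral_Ici_eq_integral_Ioi]
  have : (∫ x in Ioi (0:ℝ), Real.exp (-((1 + a) * x)))
      = (1 + a)⁻¹ • ∫ x in Ioi ((1 + a) * 0), Real.exp (-x) := by
    rw [← integral_comp_mul_left_Ioi (fun x => Real.exp (-x)) 0 hb]
  rw [this]
  rw [mul_zero, integral_exp_neg_Ioi_zero, ENNReal.toReal_ofReal (by positivity)]
  simp [one_div]

lemma lintegral_id_expMeasure_lt_top : ∫⁻ x, ENNReal.ofReal x ∂(expMeasure 1) < ⊤ := by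
  rw [expMeasure_eq, lintegral_withDensity_eq_lintegral_mul _ measurable_exponentialPDF
    ENNReal.measurable_ofReal]
  have hpt : ∀ x : ℝ, (exponentialPDF 1 * fun x => ENNReal.ofReal x) x
      = ENNReal.ofReal (Set.indicator (Ici 0) (fun x => Real.exp (-x) * x) x) := by
    intro x
    simp only [Pi.mul_apply, exponentialPDF_eq, Set.indicator_apply, mem_Ici]
    rw [← ENNReal.ofReal_mul (by positivity)]
    congr 1
    by_cases hx : 0 ≤ x
    · simp only [if_pos hx, one_mul]
    · simp [if_neg hx]
  simp only [hpt]
  have hint : Integrable (Set.indicator (Ici 0) (fun x => Real.exp (-x) * x)) volume := by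
    rw [integrable_indicator_iff measurableSet_Ici]
    rw [integrableOn_Ici_iff_integrableOn_Ioi]
    have := Real.GammaIntegral_convergent (s := 2) (by norm_num)
    refine this.congr_fun (fun x hx => ?_) measurableSet_Ioi
    norm_num
  rw [← ofReal_integral_eq_lintegral_ofReal hint (Filter.Eventually.of_forall fun x =>
    Set.indicator_nonneg (fun y hy => mul_nonneg (Real.exp_pos _).le hy) x)]
  exact ENNReal.ofReal_lt_top


end KingmanAux

open KingmanAux
set_option maxHeartbeats 1000000

/-- The Laplace transform of the Kingman coalescent time `T n` is the infinite
product `E[e^{−λ T n}] = ∏_{i=n+1}^∞ C(i,2)/(C(i,2) + λ)` where `C(i,2) = i(i−1)/2`. -/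
theorem kingman_Tn_laplace_transform
    {Ω : Type*} [MeasurableSpace Ω] (μ : Measure Ω) [IsProbabilityMeasure μ]
    (S : ℕ → Ω → ℝ)
    (hindep : iIndepFun
      (fun i : {i : ℕ // 2 ≤ i} => S i) μ)
    (hexp : ∀ i : ℕ, 2 ≤ i → μ.map (S i) = expMeasure 1)
    (T : ℕ → Ω → ℝ)
    (hT : ∀ n ω, T n ω
      = ∑' i : ℕ, if n + 1 ≤ i then 2 * S i ω / ((i : ℝ) * ((i : ℝ) - 1)) else 0) :
    ∀ l : ℝ, 0 ≤ l → ∀ n : ℕ, 1 ≤ n →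
      ∫ ω, Real.exp (-(l * T n ω)) ∂μ
        = ∏' i : ℕ, if n + 1 ≤ i then
            ((i : ℝ) * ((i : ℝ) - 1) / 2) / ((i : ℝ) * ((i : ℝ) - 1) / 2 + l)
          else 1 := by
  intro l hl n hn
  classical
  have hprob : IsProbabilityMeasure (expMeasure 1) := isProbabilityMeasure_expMeasure one_pos
  -- `S i` is a.e. measurable for `2 ≤ i`, take a measurable modification `S'`
  have hAE : ∀ i, 2 ≤ i → AEMeasurable (S i) μ := by
    intro i hi
    by_contra h
    have h0 := Measure.map_of_not_aemeasurable (f := S i) (μ := μ) h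
    rw [hexp i hi] at h0
    exact (IsProbabilityMeasure.ne_zero (expMeasure 1)) h0
  set S' : ℕ → Ω → ℝ := fun i => if h : AEMeasurable (S i) μ then h.mk (S i) else S i with hS'
  have hS'meas : ∀ i, 2 ≤ i → Measurable (S' i) := by
    intro i hi; simp only [hS', dif_pos (hAE i hi)]; exact (hAE i hi).measurable_mk
  have hS'ae : ∀ i, 2 ≤ i → S i =ᵐ[μ] S' i := by
    intro i hi; simp only [hS', dif_pos (hAE i hi)]; exact (hAE i hi).ae_eq_mk
  have hS'map : ∀ i, 2 ≤ i → μ.map (S' i) = expMeasure 1 := by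
    intro i hi; rw [← Measure.map_congr (hS'ae i hi), hexp i hi]
  have hindep' : iIndepFun (fun i : {i : ℕ // 2 ≤ i} => S' i) μ :=
    iIndepFun_of_ae_eq hindep (fun i => hS'ae i i.2)
  have hS'nonneg : ∀ i, 2 ≤ i → ∀ᵐ ω ∂μ, 0 ≤ S' i ω := by
    intro i hi
    have h0 : μ.map (S' i) (Set.Iio 0) = 0 := by
      rw [hS'map i hi, expMeasure_eq, withDensity_apply _ measurableSet_Iio]
      exact lintegral_exponentialPDF_of_nonpos le_rfl
    rw [Measure.map_apply_of_aemeasurable (hS'meas i hi).aemeasurable measurableSet_Iio] at h0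
    filter_upwards [measure_eq_zero_iff_ae_notMem.mp h0] with ω hω
    simpa [not_lt] using hω
  -- the summands
  set X : ℕ → Ω → ℝ :=
    fun i ω => if n + 1 ≤ i then 2 * S' i ω / ((i : ℝ) * ((i : ℝ) - 1)) else 0 with hX
  have h2le : ∀ i : ℕ, n + 1 ≤ i → 2 ≤ i := fun i hi => le_trans (by omega) hi
  have hdpos : ∀ i : ℕ, 2 ≤ i → 0 < (i : ℝ) * ((i : ℝ) - 1) := by
    intro i hi
    have : (2:ℝ) ≤ (i:ℝ) := by exact_mod_cast hi
    nlinarith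
  have hXmeas : ∀ i, Measurable (X i) := by
    intro i
    by_cases hi : n + 1 ≤ i
    · simp only [hX, if_pos hi]
      exact ((hS'meas i (h2le i hi)).const_mul 2).div_const _
    · simp only [hX, if_neg hi]; exact measurable_const
  have hXnonneg : ∀ᵐ ω ∂μ, ∀ i, 0 ≤ X i ω := by
    rw [ae_all_iff]
    intro i
    by_cases hi : n + 1 ≤ i
    · filter_upwards [hS'nonneg i (h2le i hi)] with ω hω
      simp only [hX, if_pos hi]
      have := (hdpos i (h2le i hi)).le
      positivity
    · filter_upwards with ω; simp only [hX, if_neg hi, le_refl]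
  -- a.e. summability
  have hgsum : Summable (fun i : ℕ => if n + 1 ≤ i then 2 / ((i : ℝ) * ((i : ℝ) - 1)) else 0) := by
    apply Summable.of_nonneg_of_le
      (f := fun i : ℕ => 4 * (1 / (i : ℝ) ^ 2))
    · intro i
      by_cases hi : n + 1 ≤ i
      · simp only [if_pos hi]; exact div_nonneg (by norm_num) (hdpos i (h2le i hi)).le
      · simp only [if_neg hi, le_refl]
    · intro i
      by_cases hi : n + 1 ≤ i
      · simp only [if_pos hi]
        have h2 : (2:ℝ) ≤ (i:ℝ) := by exact_mod_cast h2le i hi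
        rw [div_le_iff₀ (hdpos i (h2le i hi))]
        have : (0:ℝ) < (i:ℝ)^2 := by positivity
        rw [mul_one_div, div_mul_eq_mul_div, le_div_iff₀ this]
        nlinarith
      · simp only [if_neg hi]
        positivity
    · exact (summable_one_div_nat_pow.mpr one_lt_two).mul_left 4
  have hXsummable : ∀ᵐ ω ∂μ, Summable (fun i => X i ω) := by
    have key : ∫⁻ ω, ∑' i, ENNReal.ofReal (X i ω) ∂μ < ⊤ := by
      rw [lintegral_tsum (fun i => ((hXmeas i).ennreal_ofReal).aemeasurable)]
      have hterm : ∀ i, ∫⁻ ω, ENNReal.ofReal (X i ω) ∂μ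
          = ENNReal.ofReal (if n + 1 ≤ i then 2 / ((i : ℝ) * ((i : ℝ) - 1)) else 0)
            * ∫⁻ x, ENNReal.ofReal x ∂(expMeasure 1) := by
        intro i
        by_cases hi : n + 1 ≤ i
        · have hd := hdpos i (h2le i hi)
          have : ∀ ω, ENNReal.ofReal (X i ω)
              = ENNReal.ofReal (2 / ((i : ℝ) * ((i : ℝ) - 1))) * ENNReal.ofReal (S' i ω) := by
            intro ω
            rw [← ENNReal.ofReal_mul (by positivity)]
            simp only [hX, if_pos hi]
            ring_nf
          simp only [this, if_pos hi]
          rw [lintegral_const_mul _ (hS'meas i (h2le i hi)).ennreal_ofReal]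
          congr 1
          rw [← hS'map i (h2le i hi),
            lintegral_map ENNReal.measurable_ofReal (hS'meas i (h2le i hi))]
        · simp only [hX, if_neg hi, ENNReal.ofReal_zero, lintegral_zero, zero_mul]
      simp only [hterm]
      rw [ENNReal.tsum_mul_right]
      apply ENNReal.mul_lt_top _ lintegral_id_expMeasure_lt_top
      rw [← ENNReal.ofReal_tsum_of_nonneg (fun i => by
        by_cases hi : n + 1 ≤ i
        · simp only [if_pos hi]; exact div_nonneg (by norm_num) (hdpos i (h2le i hi)).le
        · simp only [if_neg hi, le_refl]) hgsum]
      exact ENNReal.ofReal_lt_top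
    filter_upwards [ae_lt_top (Measurable.ennreal_tsum fun i => (hXmeas i).ennreal_ofReal) key.ne,
      hXnonneg] with ω hω hnn
    have := ENNReal.summable_toReal (f := fun i => ENNReal.ofReal (X i ω)) (by
      exact hω.ne)
    refine this.congr fun i => ?_
    rw [ENNReal.toReal_ofReal (hnn i)]
  -- a.e. identification of T n with the sum of X
  have hTae : ∀ᵐ ω ∂μ, T n ω = ∑' i, X i ω := by
    have : ∀ᵐ ω ∂μ, ∀ i, 2 ≤ i → S i ω = S' i ω := by
      rw [ae_all_iff]
      intro i
      by_cases hi : 2 ≤ i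
      · filter_upwards [hS'ae i hi] with ω hω _; exact hω
      · filter_upwards with ω h; exact absurd h hi
    filter_upwards [this] with ω hω
    rw [hT n ω]
    apply tsum_congr
    intro i
    by_cases hi : n + 1 ≤ i
    · simp only [hX, if_pos hi, hω i (h2le i hi)]
    · simp only [hX, if_neg hi]
  -- independent transformed family on the subtype
  set Z : {i : ℕ // 2 ≤ i} → Ω → ℝ := fun j => X j with hZ
  have hZindep : iIndepFun Z μ := by
    have h := hindep'.comp
      (fun j : {i : ℕ // 2 ≤ i} =>
        fun x : ℝ => if n + 1 ≤ (j:ℕ) then 2 * x / ((j : ℕ) * ((j : ℕ) - 1) : ℝ) else 0)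
      (fun j => by
        by_cases hj : n + 1 ≤ (j:ℕ)
        · simp only [if_pos hj]; exact (measurable_id.const_mul 2).div_const _
        · simp only [if_neg hj]; exact measurable_const)
    convert h using 1
    rfl
  have hmgf : ∀ j : {i : ℕ // 2 ≤ i}, n + 1 ≤ (j:ℕ) →
      mgf (Z j) μ (-l)
        = (((j:ℕ) : ℝ) * (((j:ℕ) : ℝ) - 1) / 2) / (((j:ℕ) : ℝ) * (((j:ℕ) : ℝ) - 1) / 2 + l) := by
    intro j hj
    have hd := hdpos (j:ℕ) j.2
    set d : ℝ := ((j:ℕ) : ℝ) * (((j:ℕ) : ℝ) - 1) with hdd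
    have hd0 : d ≠ 0 := hd.ne'
    have ha0 : 0 ≤ 2 * l / d := div_nonneg (by linarith) hd.le
    have hconta : Continuous fun x : ℝ => Real.exp (-(2 * l / d * x)) :=
      Real.continuous_exp.comp ((continuous_const.mul continuous_id).neg)
    have h1 : mgf (Z j) μ (-l) = ∫ ω, Real.exp (-(2 * l / d * S' (j:ℕ) ω)) ∂μ := by
      rw [mgf]
      congr 1
      funext ω
      simp only [hZ, hX, if_pos hj]
      congr 1
      ring
    have h2 : ∫ ω, Real.exp (-(2 * l / d * S' (j:ℕ) ω)) ∂μ
        = ∫ x, Real.exp (-(2 * l / d * x)) ∂(μ.map (S' (j:ℕ))) :=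
      (integral_map (hS'meas (j:ℕ) j.2).aemeasurable hconta.aestronglyMeasurable).symm
    rw [h1, h2, hS'map (j:ℕ) j.2, integral_exp_neg_mul_expMeasure ha0]
    have hhalf : d / 2 ≠ 0 := by
      intro h; apply hd0; linarith [h]
    have hkey : (1:ℝ) + 2 * l / d = (d / 2 + l) / (d / 2) := by
      field_simp
    rw [hkey, one_div_div]
  -- the finite-product identity
  set P : ℕ → ℝ := fun i => if n + 1 ≤ i then
      ((i : ℝ) * ((i : ℝ) - 1) / 2) / ((i : ℝ) * ((i : ℝ) - 1) / 2 + l) else 1 with hP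
  have hprod_eq : ∀ F : Finset ℕ,
      ∫ ω, Real.exp (-(l * ∑ i ∈ F, X i ω)) ∂μ = ∏ i ∈ F, P i := by
    intro F
    set F' : Finset ℕ := F.filter (fun i => n + 1 ≤ i) with hF'
    have hsum_eq : ∀ ω, ∑ i ∈ F, X i ω = ∑ i ∈ F', X i ω := by
      intro ω
      rw [hF', Finset.sum_filter_of_ne]
      intro i _ hne
      by_contra hi
      exact hne (by simp only [hX, if_neg hi])
    have hprod_eq' : ∏ i ∈ F, P i = ∏ i ∈ F', P i := by
      rw [hF', Finset.prod_filter_of_ne]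
      intro i _ hne
      by_contra hi
      exact hne (by simp only [hP, if_neg hi])
    have hmem : ∀ i ∈ F', 2 ≤ i := fun i hi => h2le i (Finset.mem_filter.mp hi).2
    set F'' : Finset {i : ℕ // 2 ≤ i} := F'.subtype _ with hF''
    have hsum2 : ∀ ω, ∑ i ∈ F', X i ω = ∑ j ∈ F'', Z j ω := by
      intro ω
      simp only [hZ, hF'']
      exact (Finset.sum_subtype_of_mem (fun i => X i ω) hmem).symm
    have hmgfsum : ∫ ω, Real.exp (-(l * ∑ j ∈ F'', Z j ω)) ∂μ
        = mgf (∑ j ∈ F'', Z j) μ (-l) := by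
      rw [mgf]
      congr 1
      funext ω
      simp only [Finset.sum_apply, neg_mul]
    calc ∫ ω, Real.exp (-(l * ∑ i ∈ F, X i ω)) ∂μ
        = ∫ ω, Real.exp (-(l * ∑ j ∈ F'', Z j ω)) ∂μ := by
          congr 1; funext ω; rw [hsum_eq ω, hsum2 ω]
      _ = mgf (∑ j ∈ F'', Z j) μ (-l) := hmgfsum
      _ = ∏ j ∈ F'', mgf (Z j) μ (-l) := hZindep.mgf_sum (fun j => hXmeas j) F''
      _ = ∏ j ∈ F'', P (j:ℕ) := by
          refine Finset.prod_congr rfl (fun j hj => ?_)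
          have hj' : n + 1 ≤ (j:ℕ) :=
            (Finset.mem_filter.mp (Finset.mem_subtype.mp hj)).2
          rw [hmgf j hj', hP]
          simp [hj']
      _ = ∏ i ∈ F', P i := by rw [hF'']; exact Finset.prod_subtype_of_mem P hmem
      _ = ∏ i ∈ F, P i := hprod_eq'.symm
  -- dominated convergence
  have hI : Tendsto (fun F : Finset ℕ => ∫ ω, Real.exp (-(l * ∑ i ∈ F, X i ω)) ∂μ)
      atTop (𝓝 (∫ ω, Real.exp (-(l * T n ω)) ∂μ)) := by
    apply tendsto_integral_filter_of_dominated_convergence (fun _ => (1:ℝ))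
    · apply Filter.Eventually.of_forall
      intro F
      apply Measurable.aestronglyMeasurable
      exact (Measurable.neg ((Finset.measurable_sum F (fun i _ => hXmeas i)).const_mul l)).exp
    · apply Filter.Eventually.of_forall
      intro F
      filter_upwards [hXnonneg] with ω hω
      rw [Real.norm_eq_abs, Real.abs_exp]
      rw [Real.exp_le_one_iff]
      exact neg_nonpos.mpr (mul_nonneg hl (Finset.sum_nonneg fun i _ => hω i))
    · exact integrable_const 1
    · filter_upwards [hXsummable, hTae] with ω h1 h2
      rw [h2]
      have hcont : Continuous fun y : ℝ => Real.exp (-(l * y)) :=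
        Real.continuous_exp.comp ((continuous_const.mul continuous_id).neg)
      exact (hcont.tendsto _).comp h1.hasSum
  have hHasProd : HasProd P (∫ ω, Real.exp (-(l * T n ω)) ∂μ) := hI.congr hprod_eq
  exact hHasProd.tprod_eq.symm
end

section
/- There is a constant C > 0 such that for all n ≥ 1 and all λ ≥ 0, E[e^{−λ T_n}] ≤ C · exp(−(4/3) · min(λ/n, √λ/2)). -/
open MeasureTheory ProbabilityTheory Filter Topology
open Set
open scoped ENNReal NNReal

-- Laplace transform of exponential distribution
lemma expLaplace {a : ℝ} (ha : 0 ≤ a) :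
    ∫ x, Real.exp (-(a * x)) ∂(expMeasure 1) = (1 + a)⁻¹ := by
  have hb : (0:ℝ) < 1 + a := by linarith
  have h1 : (expMeasure 1) = volume.withDensity
      (fun x => ((gammaPDFReal 1 1 x).toNNReal : ℝ≥0∞)) := by
    rfl
  rw [h1]
  have hm : Measurable (fun x => (gammaPDFReal 1 1 x).toNNReal) :=
    (measurable_gammaPDFReal 1 1).real_toNNReal
  rw [integral_withDensity_eq_integral_smul hm]
  have h3 : ∀ x : ℝ, ((gammaPDFReal 1 1 x).toNNReal : ℝ≥0) • Real.exp (-(a*x))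
      = Set.indicator (Set.Ici (0:ℝ)) (fun x => Real.exp (-((1+a)*x))) x := by
    intro x
    rw [NNReal.smul_def, smul_eq_mul]
    by_cases hx : 0 ≤ x
    · rw [Set.indicator_of_mem (Set.mem_Ici.2 hx)]
      have : gammaPDFReal 1 1 x = Real.exp (-x) := by
        simp [gammaPDFReal, hx, Real.Gamma_one]
      rw [this, Real.coe_toNNReal _ (Real.exp_nonneg _), ← Real.exp_add]
      ring_nf
    · rw [Set.indicator_of_notMem (by simpa using hx)]
      have : gammaPDFReal 1 1 x = 0 := by simp [gammaPDFReal, hx]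
      simp [this]
  rw [integral_congr_ae (Filter.Eventually.of_forall h3), integral_indicator measurableSet_Ici,
    MeasureTheory.integral_Ici_eq_integral_Ioi]
  have hderiv : ∀ x ∈ Set.Ici (0:ℝ),
      HasDerivAt (fun y => -(Real.exp (-((1+a)*y)))/(1+a)) (Real.exp (-((1+a)*x))) x := by
    intro x _
    have h0 : HasDerivAt (fun y : ℝ => (1+a)*y) (1+a) x := by
      simpa using (hasDerivAt_id x).const_mul (1+a)
    have h1 : HasDerivAt (fun y : ℝ => -((1+a)*y)) (-(1+a)) x := h0.neg
    have h2 := h1.exp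
    have h3 := (h2.neg).div_const (1+a)
    refine h3.congr_deriv ?_
    field_simp
  have hint : IntegrableOn (fun x => Real.exp (-((1+a)*x))) (Set.Ioi (0:ℝ)) := by
    have h := exp_neg_integrableOn_Ioi 0 hb
    exact h.congr_fun (fun x _ => by simp only [neg_mul]) measurableSet_Ioi
  have htend : Tendsto (fun y => -(Real.exp (-((1+a)*y)))/(1+a)) atTop (𝓝 0) := by
    have h0 : Tendsto (fun y : ℝ => (1+a)*y) atTop atTop :=
      Tendsto.const_mul_atTop hb tendsto_id
    have h1 : Tendsto (fun y : ℝ => Real.exp (-((1+a)*y))) atTop (𝓝 0) :=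
      Real.tendsto_exp_neg_atTop_nhds_zero.comp h0
    have := (h1.neg).div_const (1+a)
    simpa using this
  rw [MeasureTheory.integral_Ioi_of_hasDerivAt_of_tendsto' hderiv hint htend]
  simp [div_eq_mul_inv]

lemma expMeasure_Iio_zero : expMeasure 1 (Set.Iio 0) = 0 := by
  rw [show expMeasure 1 = volume.withDensity (gammaPDF 1 1) from rfl,
    withDensity_apply _ measurableSet_Iio]
  exact lintegral_gammaPDF_of_nonpos le_rfl

lemma lintegral_id_expMeasure_lt_top : ∫⁻ x, ENNReal.ofReal x ∂(expMeasure 1) < ∞ := by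
  rw [show expMeasure 1 = volume.withDensity (fun x => ENNReal.ofReal (gammaPDFReal 1 1 x)) from rfl,
    lintegral_withDensity_eq_lintegral_mul _ ((measurable_gammaPDFReal 1 1).ennreal_ofReal) ENNReal.measurable_ofReal]
  have hint : Integrable (Set.indicator (Set.Ici (0:ℝ)) (fun x => 2 * Real.exp (-(2⁻¹ * x)))) := by
    refine (IntegrableOn.integrable_indicator ?_ measurableSet_Ici)
    have h : IntegrableOn (fun x => 2 * Real.exp (-2⁻¹ * x)) (Set.Ioi (-1:ℝ)) volume :=
      (exp_neg_integrableOn_Ioi (-1) (by norm_num : (0:ℝ) < 2⁻¹)).const_mul 2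
    exact (h.congr_fun (fun x _ => by rw [neg_mul]) measurableSet_Ioi).mono_set
      (fun x hx => by simpa using lt_of_lt_of_le (by norm_num : (-1:ℝ) < 0) hx)
  have hfin := hint.hasFiniteIntegral
  rw [hasFiniteIntegral_iff_ofReal (Filter.Eventually.of_forall
    (Set.indicator_nonneg (fun x _ => by positivity)))] at hfin
  refine lt_of_le_of_lt (lintegral_mono (fun x => ?_)) hfin
  simp only [Pi.mul_apply]
  by_cases hx : 0 ≤ x
  · rw [Set.indicator_of_mem (Set.mem_Ici.2 hx)]
    have h1 : ENNReal.ofReal (gammaPDFReal 1 1 x) = ENNReal.ofReal (Real.exp (-x)) := by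
      congr 1
      simp [gammaPDFReal, hx, Real.Gamma_one]
    rw [h1, ← ENNReal.ofReal_mul (Real.exp_nonneg _)]
    apply ENNReal.ofReal_le_ofReal
    have hx2 : x ≤ 2 * Real.exp (2⁻¹ * x) := by
      have := Real.add_one_le_exp (2⁻¹ * x)
      nlinarith [Real.exp_nonneg (2⁻¹ * x)]
    calc Real.exp (-x) * x ≤ Real.exp (-x) * (2 * Real.exp (2⁻¹ * x)) := by
          exact mul_le_mul_of_nonneg_left hx2 (Real.exp_nonneg _)
      _ = 2 * (Real.exp (-x) * Real.exp (2⁻¹ * x)) := by ring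
      _ = 2 * Real.exp (-(2⁻¹ * x)) := by
          rw [← Real.exp_add]; ring_nf
  · have h1 : ENNReal.ofReal (gammaPDFReal 1 1 x) = 0 := by
      simp [gammaPDFReal, hx]
    simp [h1]

lemma inv_one_add_le_exp {x : ℝ} (h0 : 0 ≤ x) (h1 : x ≤ 1) :
    (1 + x)⁻¹ ≤ Real.exp (-(69/100 * x)) := by
  have key : Real.exp (69/100 * x) ≤ 1 + x := by
    have hc := convexOn_exp.2 (Set.mem_univ (0:ℝ)) (Set.mem_univ (69/100 : ℝ))
      (by linarith : (0:ℝ) ≤ 1 - x) h0 (by ring)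
    simp only [smul_eq_mul, mul_zero, zero_add, Real.exp_zero] at hc
    have h2 : Real.exp (69/100 : ℝ) ≤ 2 := by
      rw [show (2:ℝ) = Real.exp (Real.log 2) from (Real.exp_log (by norm_num)).symm]
      exact Real.exp_le_exp.2 (le_of_lt (lt_trans (by norm_num) Real.log_two_gt_d9))
    calc Real.exp (69/100 * x) = Real.exp (x * (69/100)) := by ring_nf
      _ ≤ (1-x) * 1 + x * Real.exp (69/100) := hc
      _ ≤ (1-x) * 1 + x * 2 := by nlinarith
      _ ≤ 1 + x := le_of_eq (by ring)
  rw [Real.exp_neg]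
  exact inv_anti₀ (by positivity) key

lemma tele_sum : ∀ (K N : ℕ), 1 ≤ K → K ≤ N →
    ∑ i ∈ Finset.Icc (K+1) N, (2 / ((i:ℝ) * ((i:ℝ) - 1))) = 2/K - 2/N := by
  intro K N hK hKN
  induction N, hKN using Nat.le_induction with
  | base => simp [Finset.Icc_eq_empty_of_lt (Nat.lt_succ_self K)]
  | succ N hN ih =>
    rw [← Finset.insert_Icc_right_eq_Icc_add_one (by omega : K+1 ≤ N+1),
      Finset.sum_insert (by simp), ih]
    have hN0 : (0:ℝ) < N := by exact_mod_cast Nat.lt_of_lt_of_le hK hN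
    have hN1 : (0:ℝ) < (N:ℝ) + 1 := by linarith
    push_cast
    rw [add_sub_cancel_right]
    field_simp
    ring

lemma iIndepFun_ae_eq {Ω ι : Type*} [MeasurableSpace Ω] {μ : Measure Ω} {f g : ι → Ω → ℝ}
    (hf : iIndepFun f μ) (h : ∀ i, f i =ᵐ[μ] g i) :
    iIndepFun g μ := by
  rw [iIndepFun_iff_measure_inter_preimage_eq_mul] at hf ⊢
  intro St sets hmeas
  have hae : ∀ᵐ ω ∂μ, ∀ i ∈ St, f i ω = g i ω :=
    (Filter.eventually_all_finset St).2 (fun i _ => h i)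
  have h1 : ∀ i ∈ St, (g i ⁻¹' sets i : Set Ω) =ᵐ[μ] (f i ⁻¹' sets i : Set Ω) := by
    intro i hi
    filter_upwards [h i] with ω hω
    show (ω ∈ g i ⁻¹' sets i) = (ω ∈ f i ⁻¹' sets i)
    simp only [Set.mem_preimage, hω]
  have e1 : μ (⋂ i ∈ St, g i ⁻¹' sets i) = μ (⋂ i ∈ St, f i ⁻¹' sets i) := by
    apply measure_congr
    filter_upwards [hae] with ω hω
    show (ω ∈ ⋂ i ∈ St, g i ⁻¹' sets i) = (ω ∈ ⋂ i ∈ St, f i ⁻¹' sets i)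
    simp only [Set.mem_iInter, Set.mem_preimage, eq_iff_iff]
    constructor
    · intro hmem i hi
      rw [hω i hi]
      exact hmem i hi
    · intro hmem i hi
      rw [← hω i hi]
      exact hmem i hi
  rw [e1, hf St hmeas]
  exact (Finset.prod_congr rfl (fun i hi => measure_congr (h1 i hi))).symm

set_option maxHeartbeats 1000000 in
/-- Uniform exponential-moment bound for the Kingman coalescent times:
there is `C > 0` with `E[e^{−λ T n}] ≤ C · exp(−(4/3) · min(λ/n, √λ/2))`
for all `n ≥ 1` and `λ ≥ 0`. -/
theorem kingman_Tn_laplace_bound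
    {Ω : Type*} [MeasurableSpace Ω] (μ : Measure Ω) [IsProbabilityMeasure μ]
    (S : ℕ → Ω → ℝ)
    (hindep : iIndepFun
      (fun i : {i : ℕ // 2 ≤ i} => S i) μ)
    (hexp : ∀ i : ℕ, 2 ≤ i → μ.map (S i) = expMeasure 1)
    (T : ℕ → Ω → ℝ)
    (hT : ∀ n ω, T n ω
      = ∑' i : ℕ, if n + 1 ≤ i then 2 * S i ω / ((i : ℝ) * ((i : ℝ) - 1)) else 0) :
    ∃ C : ℝ, 0 < C ∧ ∀ n : ℕ, 1 ≤ n → ∀ l : ℝ, 0 ≤ l →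
      ∫ ω, Real.exp (-(l * T n ω)) ∂μ
        ≤ C * Real.exp (-(4 / 3) * min (l / n) (Real.sqrt l / 2)) := by
  classical
  refine ⟨Real.exp 2, Real.exp_pos 2, ?_⟩
  -- basic facts about the S i
  have hae : ∀ i : ℕ, 2 ≤ i → AEMeasurable (S i) μ := by
    intro i hi
    by_contra h
    have h2 := hexp i hi
    rw [MeasureTheory.Measure.map_of_not_aemeasurable h] at h2
    haveI := isProbabilityMeasure_expMeasure (r := 1) one_pos
    exact (IsProbabilityMeasure.ne_zero (expMeasure 1)) h2.symm
  have hnonneg : ∀ i : ℕ, 2 ≤ i → ∀ᵐ ω ∂μ, 0 ≤ S i ω := by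
    intro i hi
    have h0 : μ (S i ⁻¹' Set.Iio 0) = 0 := by
      rw [← MeasureTheory.Measure.map_apply_of_aemeasurable (hae i hi) measurableSet_Iio,
        hexp i hi]
      exact expMeasure_Iio_zero
    rw [ae_iff]
    convert h0 using 2
    ext ω
    simp [not_le]
  -- measurable modifications
  have hS'ex : ∀ i : ℕ, ∃ f : Ω → ℝ, Measurable f ∧ ((2 ≤ i) → S i =ᵐ[μ] f) := by
    intro i
    by_cases hi : 2 ≤ i
    · exact ⟨(hae i hi).mk _, (hae i hi).measurable_mk, fun _ => (hae i hi).ae_eq_mk⟩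
    · exact ⟨0, measurable_const, fun h => absurd h hi⟩
  choose S' hS'm hS'ae using hS'ex
  set c : ℕ → ℝ := fun i => 2 / ((i:ℝ) * ((i:ℝ) - 1)) with hc_def
  -- a.e. summability
  set g : ℕ → Ω → ℝ :=
    fun i ω => if 2 ≤ i then 2 * S i ω / ((i:ℝ) * ((i:ℝ) - 1)) else 0 with hg_def
  have hgmeas : ∀ i : ℕ, AEMeasurable (fun ω => ENNReal.ofReal (g i ω)) μ := by
    intro i
    by_cases hi : 2 ≤ i
    · have : AEMeasurable (fun ω => 2 * S i ω / ((i:ℝ) * ((i:ℝ) - 1))) μ :=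
        ((hae i hi).const_mul 2).div_const _
      simpa [hg_def, hi] using this.ennreal_ofReal
    · simp only [hg_def, hi, if_false]
      exact aemeasurable_const
  set J : ℝ≥0∞ := ∫⁻ x, ENNReal.ofReal x ∂(expMeasure 1) with hJ_def
  have hJ : J < ∞ := lintegral_id_expMeasure_lt_top
  have hSlint : ∀ i : ℕ, 2 ≤ i → ∫⁻ ω, ENNReal.ofReal (S i ω) ∂μ = J := by
    intro i hi
    rw [hJ_def, ← hexp i hi]
    exact (lintegral_map' ENNReal.measurable_ofReal.aemeasurable (hae i hi)).symm
  have hcnn : ∀ i : ℕ, 2 ≤ i → 0 ≤ c i := by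
    intro i hi
    have h1 : (2:ℝ) ≤ (i:ℝ) := by exact_mod_cast hi
    have : (0:ℝ) ≤ (i:ℝ) * ((i:ℝ) - 1) := by nlinarith
    exact div_nonneg (by norm_num) this
  set c' : ℕ → ℝ := fun i => if 2 ≤ i then c i else 0 with hc'_def
  have hc'nn : ∀ i, 0 ≤ c' i := by
    intro i
    by_cases hi : 2 ≤ i <;> simp [hc'_def, hi, hcnn]
  have hc'sum : Summable c' := by
    refine Summable.of_nonneg_of_le (f := fun i : ℕ => 4 * ((1:ℝ)/(i:ℝ)^2)) hc'nn ?_ ?_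
    · intro i
      by_cases hi : 2 ≤ i
      · simp only [hc'_def, hi, if_true, hc_def]
        have h1 : (2:ℝ) ≤ (i:ℝ) := by exact_mod_cast hi
        rw [mul_one_div, div_le_div_iff₀ (by nlinarith) (by positivity)]
        nlinarith
      · interval_cases i <;> simp [hc'_def, hc_def]
      -- fallback
    · exact (Real.summable_one_div_nat_pow.2 one_lt_two).mul_left 4
  have hglint : ∀ i : ℕ, ∫⁻ ω, ENNReal.ofReal (g i ω) ∂μ = ENNReal.ofReal (c' i) * J := by
    intro i
    by_cases hi : 2 ≤ i
    · have he : ∀ ω, ENNReal.ofReal (g i ω) =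
          ENNReal.ofReal (c i) * ENNReal.ofReal (S i ω) := by
        intro ω
        rw [← ENNReal.ofReal_mul (hcnn i hi)]
        congr 1
        simp only [hg_def, hi, if_true, hc_def]
        ring
      simp only [he]
      rw [lintegral_const_mul' _ _ ENNReal.ofReal_ne_top, hSlint i hi]
      simp [hc'_def, hi]
    · simp [hg_def, hc'_def, hi]
  have hkey : ∫⁻ ω, ∑' i, ENNReal.ofReal (g i ω) ∂μ < ∞ := by
    rw [lintegral_tsum hgmeas]
    simp_rw [hglint]
    rw [ENNReal.tsum_mul_right, ← ENNReal.ofReal_tsum_of_nonneg hc'nn hc'sum]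
    exact ENNReal.mul_lt_top ENNReal.ofReal_lt_top hJ
  have hpos : ∀ᵐ ω ∂μ, ∀ i : ℕ, 2 ≤ i → 0 ≤ S i ω := by
    rw [ae_all_iff]
    intro i
    by_cases hi : 2 ≤ i
    · exact (hnonneg i hi).mono fun ω h _ => h
    · exact Filter.Eventually.of_forall fun ω h => absurd h hi
  have hS'eq : ∀ᵐ ω ∂μ, ∀ i : ℕ, 2 ≤ i → S i ω = S' i ω := by
    rw [ae_all_iff]
    intro i
    by_cases hi : 2 ≤ i
    · exact (hS'ae i hi).mono fun ω h _ => h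
    · exact Filter.Eventually.of_forall fun ω h => absurd h hi
  have hsummae : ∀ᵐ ω ∂μ, Summable (fun i => g i ω) := by
    have hfin : ∀ᵐ ω ∂μ, ∑' i, ENNReal.ofReal (g i ω) < ∞ :=
      ae_lt_top' (AEMeasurable.ennreal_tsum hgmeas) hkey.ne
    filter_upwards [hfin, hpos] with ω h1 h2
    have h3 : ∀ i, 0 ≤ g i ω := by
      intro i
      by_cases hi : 2 ≤ i
      · simp only [hg_def, hi, if_true]
        have hi1 : (2:ℝ) ≤ (i:ℝ) := by exact_mod_cast hi
        exact div_nonneg (by nlinarith [h2 i hi]) (by nlinarith)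
      · simp [hg_def, hi]
    have h4 := ENNReal.summable_toReal h1.ne
    exact h4.congr fun i => ENNReal.toReal_ofReal (h3 i)
  -- now the bound, for given n, l
  intro n hn l hl
  set s : ℝ := Real.sqrt (2*l) with hs_def
  have hs0 : 0 ≤ s := Real.sqrt_nonneg _
  have hs2 : s^2 = 2*l := Real.sq_sqrt (by linarith)
  set m : ℕ := Nat.ceil s with hm_def
  set K : ℕ := max n m with hK_def
  set N : ℕ := 30 * K with hN_def
  have hK1 : 1 ≤ K := le_trans hn (le_max_left n m)
  have hKN : K ≤ N := by omega
  have hKm : (s:ℝ) ≤ K := le_trans (Nat.le_ceil s) (by exact_mod_cast le_max_right n m)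
  have hmem : ∀ i ∈ Finset.Icc (K+1) N, 2 ≤ i := by
    intro i hi
    rw [Finset.mem_Icc] at hi
    omega
  have hmemn : ∀ i ∈ Finset.Icc (K+1) N, n + 1 ≤ i := by
    intro i hi
    rw [Finset.mem_Icc] at hi
    have := le_max_left n m
    omega
  have hiK : ∀ i ∈ Finset.Icc (K+1) N, (2:ℝ) * l ≤ (i:ℝ) * ((i:ℝ) - 1) := by
    intro i hi
    rw [Finset.mem_Icc] at hi
    have h1 : (K:ℝ) + 1 ≤ (i:ℝ) := by exact_mod_cast hi.1
    nlinarith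
  have hx0 : ∀ i ∈ Finset.Icc (K+1) N, 0 ≤ l * c i := fun i hi =>
    mul_nonneg hl (hcnn i (hmem i hi))
  have hxle : ∀ i ∈ Finset.Icc (K+1) N, l * c i ≤ 1 := by
    intro i hi
    have h2 : (2:ℝ) ≤ (i:ℝ) := by exact_mod_cast hmem i hi
    have hd : (0:ℝ) < (i:ℝ) * ((i:ℝ) - 1) := by nlinarith
    rw [hc_def]
    rw [mul_div_assoc'] at *
    rw [div_le_one hd]
    have := hiK i hi
    nlinarith
  set F : Finset {i : ℕ // 2 ≤ i} := (Finset.Icc (K+1) N).subtype (fun i => 2 ≤ i) with hF_def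
  have hmemF : ∀ j : {i : ℕ // 2 ≤ i}, j ∈ F → (j:ℕ) ∈ Finset.Icc (K+1) N := by
    intro j hj
    simpa [hF_def] using hj
  set X : {i : ℕ // 2 ≤ i} → Ω → ℝ := fun j ω => c j * S' j ω with hX_def
  have hXindep : iIndepFun X μ := by
    have h1 := iIndepFun_ae_eq hindep (fun j : {i : ℕ // 2 ≤ i} => hS'ae j j.2)
    exact h1.comp (fun j x => c j * x) (fun j => measurable_id.const_mul _)
  have hXmeas : ∀ j, Measurable (X j) := fun j => (hS'm j).const_mul _
  have hsum_apply : ∀ ω, (∑ j ∈ F, X j) ω = ∑ i ∈ Finset.Icc (K+1) N, c i * S' i ω := by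
    intro ω
    rw [Finset.sum_apply]
    simp only [hX_def, hF_def]
    exact Finset.sum_subtype_of_mem (fun i => c i * S' i ω) hmem
  -- a.e. comparison with T n
  have hTge : ∀ᵐ ω ∂μ, (∑ j ∈ F, X j) ω ≤ T n ω ∧ 0 ≤ (∑ j ∈ F, X j) ω := by
    filter_upwards [hsummae, hpos, hS'eq] with ω hsum hp heq
    set f : ℕ → ℝ :=
      fun i => if n + 1 ≤ i then 2 * S i ω / ((i:ℝ) * ((i:ℝ) - 1)) else 0 with hf_def
    have hf0 : ∀ i, 0 ≤ f i := by
      intro i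
      by_cases hi : n + 1 ≤ i
      · have hi2 : 2 ≤ i := by omega
        have hi1 : (2:ℝ) ≤ (i:ℝ) := by exact_mod_cast hi2
        simp only [hf_def, hi, if_true]
        exact div_nonneg (by nlinarith [hp i hi2]) (by nlinarith)
      · simp only [hf_def, hi, if_false, le_refl]
    have hfg : ∀ i, f i ≤ g i ω := by
      intro i
      by_cases hi : n + 1 ≤ i
      · have hi2 : 2 ≤ i := by omega
        simp [hf_def, hg_def, hi, hi2, (by omega : n < i)]
      · simpa only [hf_def, hi, if_false] using
          (by
            by_cases hi2 : 2 ≤ i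
            · have hi1 : (2:ℝ) ≤ (i:ℝ) := by exact_mod_cast hi2
              simp only [hg_def, hi2, if_true]
              exact div_nonneg (by nlinarith [hp i hi2]) (by nlinarith)
            · simp [hg_def, hi2] : (0:ℝ) ≤ g i ω)
    have hfs : Summable f := Summable.of_nonneg_of_le hf0 hfg hsum
    have hsum_eq : ∑ i ∈ Finset.Icc (K+1) N, f i
        = ∑ i ∈ Finset.Icc (K+1) N, c i * S' i ω := by
      refine Finset.sum_congr rfl fun i hi => ?_
      have h1 := hmemn i hi
      have h2 := hmem i hi
      simp only [hf_def, h1, if_true, hc_def]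
      rw [← heq i h2]
      ring
    constructor
    · rw [hsum_apply ω, ← hsum_eq, hT n ω]
      exact hfs.sum_le_tsum _ (fun i _ => hf0 i)
    · rw [hsum_apply ω, ← hsum_eq]
      exact Finset.sum_nonneg fun i hi => hf0 i
  -- step 1 : compare integral with mgf
  have hint : Integrable (fun ω => Real.exp ((-l) * (∑ j ∈ F, X j) ω)) μ := by
    refine Integrable.mono' (integrable_const 1) ?_ ?_
    · have hmeas : Measurable fun ω => (∑ j ∈ F, X j) ω := by
        have : (fun ω => (∑ j ∈ F, X j) ω) = fun ω => ∑ j ∈ F, X j ω := by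
          funext ω
          exact Finset.sum_apply _ _ _
        rw [this]
        exact Finset.measurable_sum F fun j _ => hXmeas j
      exact ((hmeas.const_mul (-l)).exp).aestronglyMeasurable
    · filter_upwards [hTge] with ω hω
      rw [Real.norm_eq_abs, abs_of_pos (Real.exp_pos _), Real.exp_le_one_iff]
      exact mul_nonpos_of_nonpos_of_nonneg (by linarith) hω.2
  have step1 : ∫ ω, Real.exp (-(l * T n ω)) ∂μ ≤ mgf (∑ j ∈ F, X j) μ (-l) := by
    rw [mgf]
    refine integral_mono_of_nonneg
      (Filter.Eventually.of_forall fun ω => (Real.exp_pos _).le) hint ?_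
    filter_upwards [hTge] with ω hω
    apply Real.exp_le_exp.2
    have h1 := mul_le_mul_of_nonneg_left hω.1 hl
    nlinarith
  -- step 2 : mgf factorizes
  have step2 : mgf (∑ j ∈ F, X j) μ (-l) = ∏ j ∈ F, (1 + l * c j)⁻¹ := by
    rw [hXindep.mgf_sum hXmeas F]
    refine Finset.prod_congr rfl fun j hj => ?_
    have hj2 : 2 ≤ (j:ℕ) := j.2
    have hcn : 0 ≤ c j := hcnn _ hj2
    rw [mgf]
    have e1 : (fun ω => Real.exp ((-l) * X j ω))
        =ᵐ[μ] fun ω => Real.exp (-((l * c (j:ℕ)) * S (j:ℕ) ω)) := by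
      filter_upwards [hS'ae (j:ℕ) hj2] with ω hω
      simp only [hX_def]
      rw [← hω]
      ring_nf
    have hg : AEStronglyMeasurable (fun x : ℝ => Real.exp (-((l * c (j:ℕ)) * x)))
        (μ.map (S (j:ℕ))) :=
      ((measurable_id.const_mul _).neg.exp).aestronglyMeasurable
    have h2 := MeasureTheory.integral_map (hae (j:ℕ) hj2) hg
    rw [hexp (j:ℕ) hj2] at h2
    calc μ[fun ω => Real.exp ((-l) * X j ω)]
        = ∫ ω, Real.exp (-((l * c (j:ℕ)) * S (j:ℕ) ω)) ∂μ := integral_congr_ae e1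
      _ = ∫ x, Real.exp (-((l * c (j:ℕ)) * x)) ∂(expMeasure 1) := h2.symm
      _ = (1 + l * c (j:ℕ))⁻¹ := expLaplace (mul_nonneg hl hcn)
  -- step 3 : bound the product
  have step3 : ∏ j ∈ F, (1 + l * c j)⁻¹
      ≤ Real.exp (-(69/100 * l * (2/(K:ℝ) - 2/(N:ℝ)))) := by
    have h1 : ∏ j ∈ F, (1 + l * c j)⁻¹ ≤ ∏ j ∈ F, Real.exp (-(69/100 * (l * c j))) := by
      refine Finset.prod_le_prod (fun j hj => ?_) (fun j hj => ?_)
      · have := hx0 _ (hmemF j hj)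
        positivity
      · exact inv_one_add_le_exp (hx0 _ (hmemF j hj)) (hxle _ (hmemF j hj))
    refine le_trans h1 (le_of_eq ?_)
    rw [← Real.exp_sum]
    congr 1
    have h2 : ∑ j ∈ F, -(69/100 * (l * c (j:ℕ))) =
        -(69/100 * l * ∑ i ∈ Finset.Icc (K+1) N, c i) := by
      rw [Finset.sum_neg_distrib]
      congr 1
      rw [Finset.mul_sum, ← Finset.sum_subtype_of_mem (fun i => 69/100 * l * c i) hmem, hF_def]
      exact Finset.sum_congr rfl fun j _ => by ring
    rw [h2, tele_sum K N hK1 hKN]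
  -- step 4 : final arithmetic
  have step4 : Real.exp (-(69/100 * l * (2/(K:ℝ) - 2/(N:ℝ))))
      ≤ Real.exp 2 * Real.exp (-(4 / 3) * min (l / n) (Real.sqrt l / 2)) := by
    rw [← Real.exp_add, Real.exp_le_exp]
    have hKpos : (0:ℝ) < K := by exact_mod_cast hK1
    have hNval : (N:ℝ) = 30 * K := by rw [hN_def]; push_cast; ring
    have hA : 69/100 * l * (2/(K:ℝ) - 2/(N:ℝ)) = 2001/1500 * (l / K) := by
      rw [hNval]
      field_simp
      ring
    rw [hA]
    rcases le_or_gt m n with hcase | hcase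
    · -- K = n
      have hKeq : (K:ℝ) = n := by
        rw [hK_def, max_eq_left hcase]
      rw [hKeq]
      have h1 : min (l / n) (Real.sqrt l / 2) ≤ l / n := min_le_left _ _
      have h2 : 0 ≤ l / (n:ℝ) := div_nonneg hl (by positivity)
      nlinarith
    · -- K = m
      have hKeq : (K:ℝ) = m := by
        rw [hK_def, max_eq_right hcase.le]
      rw [hKeq]
      have hm1 : (1:ℝ) ≤ (m:ℝ) := by
        have : 1 ≤ m := by omega
        exact_mod_cast this
      have hms : (m:ℝ) ≤ s + 1 := (Nat.ceil_lt_add_one hs0).le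
      have hmpos : (0:ℝ) < m := by linarith
      have h1 : min (l / n) (Real.sqrt l / 2) ≤ Real.sqrt l / 2 := min_le_right _ _
      have hsl : Real.sqrt l ≤ 3/4 * s := by
        have h42 : (4/3 : ℝ) ≤ Real.sqrt 2 := by
          rw [show (4/3:ℝ) = Real.sqrt ((4/3)^2) from (Real.sqrt_sq (by norm_num)).symm]
          exact Real.sqrt_le_sqrt (by norm_num)
        have hmul : s = Real.sqrt 2 * Real.sqrt l := by
          rw [hs_def, Real.sqrt_mul (by norm_num)]
        nlinarith [Real.sqrt_nonneg l]
      have hq0 : 0 ≤ l / (m:ℝ) := div_nonneg hl hmpos.le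
      have hqm : l / (m:ℝ) * m = l := div_mul_cancel₀ l hmpos.ne'
      have h5 : s^2 ≤ 2 * (l/(m:ℝ)) * (s+1) := by
        have := mul_le_mul_of_nonneg_left hms hq0
        nlinarith
      have h6 : Real.sqrt l / 2 ≤ (3/8) * s := by linarith
      have h7 : (4/3 : ℝ) * ((3/8) * s) = s / 2 := by ring
      have hmin0 : 0 ≤ Real.sqrt l / 2 := by positivity
      nlinarith [Real.sqrt_nonneg l]
  calc ∫ ω, Real.exp (-(l * T n ω)) ∂μ ≤ mgf (∑ j ∈ F, X j) μ (-l) := step1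
    _ = ∏ j ∈ F, (1 + l * c j)⁻¹ := step2
    _ ≤ Real.exp (-(69/100 * l * (2/(K:ℝ) - 2/(N:ℝ)))) := step3
    _ ≤ Real.exp 2 * Real.exp (-(4 / 3) * min (l / n) (Real.sqrt l / 2)) := step4
end

section
/- Almost surely, n·T_n converges to 2 as n → ∞. -/
open MeasureTheory ProbabilityTheory Filter Topology Real Set
open scoped ENNReal NNReal


lemma expPDF_nonneg (x : ℝ) : 0 ≤ exponentialPDFReal 1 x :=
  exponentialPDFReal_nonneg one_pos x

lemma expMeasure_eq : expMeasure 1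
    = volume.withDensity (fun x => (Real.toNNReal (exponentialPDFReal 1 x) : ℝ≥0∞)) :=
  rfl

lemma exp_mean_integrand : (fun x : ℝ => exponentialPDFReal 1 x * x)
    = Set.indicator (Ici 0) (fun x => Real.exp (-x) * x ^ ((2:ℝ) - 1)) := by
  ext x
  by_cases hx : 0 ≤ x
  · simp only [Set.indicator_of_mem (mem_Ici.2 hx), exponentialPDFReal, gammaPDFReal, if_pos hx,
      Real.Gamma_one, Real.rpow_one, one_pow, div_one, sub_self, Real.rpow_zero, one_mul, mul_one,
      (by norm_num : (2:ℝ) - 1 = 1)]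
  · simp only [Set.indicator_of_notMem (fun h => hx (mem_Ici.1 h)), exponentialPDFReal,
      gammaPDFReal, if_neg hx, zero_mul]

lemma exp_mean_vol : ∫ x, exponentialPDFReal 1 x * x = 1 := by
  rw [exp_mean_integrand, integral_indicator measurableSet_Ici,
    MeasureTheory.integral_Ici_eq_integral_Ioi,
    ← Real.Gamma_eq_integral (by norm_num : (0:ℝ) < 2),
    (by norm_num : (2:ℝ) = (1:ℕ) + 1), Real.Gamma_nat_eq_factorial]
  simp

lemma exp_mean_integrable_vol : Integrable (fun x : ℝ => exponentialPDFReal 1 x * x) := by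
  rw [exp_mean_integrand, integrable_indicator_iff measurableSet_Ici,
    integrableOn_Ici_iff_integrableOn_Ioi]
  exact Real.GammaIntegral_convergent (by norm_num : (0:ℝ) < 2)

lemma exp_integrable : Integrable (fun x : ℝ => x) (expMeasure 1) := by
  rw [expMeasure_eq, integrable_withDensity_iff_integrable_smul
    (by measurability : Measurable fun x => Real.toNNReal (exponentialPDFReal 1 x))]
  refine exp_mean_integrable_vol.congr (Filter.Eventually.of_forall fun x => ?_)
  simp [NNReal.smul_def, Real.coe_toNNReal _ (expPDF_nonneg x), mul_comm]

lemma exp_mean : ∫ x, x ∂(expMeasure 1) = 1 := by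
  rw [expMeasure_eq, integral_withDensity_eq_integral_smul
    (by measurability : Measurable fun x => Real.toNNReal (exponentialPDFReal 1 x))]
  have h : (∫ x : ℝ, (Real.toNNReal (exponentialPDFReal 1 x)) • x)
      = ∫ x : ℝ, exponentialPDFReal 1 x * x := by
    refine integral_congr_ae (Filter.Eventually.of_forall fun x => ?_)
    simp [NNReal.smul_def, Real.coe_toNNReal _ (expPDF_nonneg x)]
  rw [h, exp_mean_vol]

lemma exp_Iio_zero : expMeasure 1 (Iio 0) = 0 := by
  have : expMeasure 1 (Iio 0) = ∫⁻ y in Iio (0:ℝ), exponentialPDF 1 y := by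
    rw [expMeasure, gammaMeasure, withDensity_apply _ measurableSet_Iio]; rfl
  rw [this, lintegral_exponentialPDF_of_nonpos le_rfl]


noncomputable def KA (b : ℕ → ℝ) (m : ℕ) : ℝ := ∑ i ∈ Finset.range (m+1), b i
noncomputable def Kc (i : ℕ) : ℝ := 2 / ((i:ℝ) * ((i:ℝ) - 1))
noncomputable def Ke (m : ℕ) : ℝ := 1/((m:ℝ)-1) + 1/(m:ℝ)

set_option maxHeartbeats 1000000 in
lemma det_lemma (b : ℕ → ℝ) (hb : ∀ i, 0 ≤ b i) (hb0 : b 0 = 0) (hb1 : b 1 = 0)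
    (hA : Tendsto (fun m : ℕ => (∑ i ∈ Finset.range (m+1), b i) / m) atTop (𝓝 1)) :
    Tendsto (fun n : ℕ =>
        (n:ℝ) * ∑' i : ℕ, if n + 1 ≤ i then 2 * b i / ((i:ℝ) * ((i:ℝ) - 1)) else 0)
      atTop (𝓝 2) := by
  have hA0 : ∀ m, 0 ≤ KA b m := fun m => Finset.sum_nonneg fun i _ => hb i
  have hArec : ∀ m, KA b (m+1) = KA b m + b (m+1) := fun m => Finset.sum_range_succ b (m+1)
  have hc0 : ∀ i, 0 ≤ Kc i := by
    intro i
    match i with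
    | 0 => simp [Kc]
    | 1 => simp [Kc]
    | (i+2) =>
      have h1 : (0:ℝ) < ((i:ℝ)+2) * (((i:ℝ)+2) - 1) := by nlinarith [Nat.cast_nonneg (α := ℝ) i]
      have h2 : ((i+2:ℕ):ℝ) = (i:ℝ)+2 := by push_cast; ring
      simp only [Kc, h2]
      positivity
  have hcast2 : ∀ i : ℕ, 2 ≤ i → (2:ℝ) ≤ (i:ℝ) := by
    intro i hi; exact_mod_cast hi
  have hd0 : ∀ i, 2 ≤ i → 0 ≤ Kc i - Kc (i+1) := by
    intro i hi
    have h2 : (2:ℝ) ≤ (i:ℝ) := hcast2 i hi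
    have key : Kc i - Kc (i+1) = 4 / (((i:ℝ)-1) * (i:ℝ) * ((i:ℝ)+1)) := by
      simp only [Kc]
      push_cast
      have h1 : ((i:ℝ)) ≠ 0 := by linarith
      have h3 : ((i:ℝ) - 1) ≠ 0 := by linarith
      have h4 : ((i:ℝ) + 1) ≠ 0 := by linarith
      simp only [add_sub_cancel_right]
      field_simp
      ring
    rw [key]
    have hpos : (0:ℝ) < ((i:ℝ)-1) * (i:ℝ) * ((i:ℝ)+1) :=
      mul_pos (mul_pos (by linarith) (by linarith)) (by linarith)
    positivity
  have hdi : ∀ i : ℕ, 2 ≤ i → (Kc i - Kc (i+1)) * (i:ℝ) = 2 * (Ke i - Ke (i+1)) := by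
    intro i hi
    have h2 : (2:ℝ) ≤ (i:ℝ) := hcast2 i hi
    simp only [Kc, Ke]
    push_cast
    have h1 : ((i:ℝ)) ≠ 0 := by linarith
    have h3 : ((i:ℝ) - 1) ≠ 0 := by linarith
    have h4 : ((i:ℝ) + 1) ≠ 0 := by linarith
    simp only [add_sub_cancel_right]
    field_simp
    ring
  have he0' : ∀ m : ℕ, 1 ≤ m → 0 ≤ Ke m := by
    intro m hm
    have h1 : (1:ℝ) ≤ (m:ℝ) := by exact_mod_cast hm
    have h2 : (0:ℝ) ≤ (m:ℝ) - 1 := by linarith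
    simp only [Ke]
    positivity
  have habel : ∀ n N : ℕ, n ≤ N → ∑ i ∈ Finset.Ioc n N, Kc i * b i
      = Kc (N+1) * KA b N - Kc (n+1) * KA b n
        + ∑ i ∈ Finset.Ioc n N, (Kc i - Kc (i+1)) * KA b i := by
    intro n N hN
    induction N, hN using Nat.le_induction with
    | base => simp
    | succ N hN ih =>
      rw [Finset.sum_Ioc_succ_top (by omega), Finset.sum_Ioc_succ_top (by omega), ih, hArec N]
      ring
  have htel : ∀ n N : ℕ, n ≤ N → ∑ i ∈ Finset.Ioc n N, (2:ℝ) * (Ke i - Ke (i+1))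
      = 2 * (Ke (n+1) - Ke (N+1)) := by
    intro n N hN
    induction N, hN using Nat.le_induction with
    | base => simp
    | succ N hN ih =>
      rw [Finset.sum_Ioc_succ_top (by omega), ih]
      ring
  have hcN : ∀ N : ℕ, 1 ≤ N → Kc (N+1) * (N:ℝ) = 2/((N:ℝ)+1) := by
    intro N hN
    have h1 : (1:ℝ) ≤ (N:ℝ) := by exact_mod_cast hN
    simp only [Kc]
    push_cast
    have h2 : ((N:ℝ)) ≠ 0 := by linarith
    have h3 : ((N:ℝ) + 1) ≠ 0 := by linarith
    simp only [add_sub_cancel_right]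
    field_simp
  -- limit helpers
  have tnat : Tendsto (fun n : ℕ => (n:ℝ)) atTop atTop := tendsto_natCast_atTop_atTop
  have t1 : Tendsto (fun N : ℕ => 2/((N:ℝ)+1)) atTop (𝓝 0) := by
    have h1 : Tendsto (fun N : ℕ => (N:ℝ) + 1) atTop atTop :=
      tendsto_atTop_add_const_right atTop 1 tnat
    have h2 := h1.inv_tendsto_atTop.const_mul (2:ℝ)
    simp only [mul_zero] at h2
    refine h2.congr fun N => ?_
    simp [div_eq_mul_inv]
  have te : Tendsto Ke atTop (𝓝 0) := by
    have h1 : Tendsto (fun m : ℕ => (m:ℝ) - 1) atTop atTop :=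
      tendsto_atTop_add_const_right atTop (-1) tnat
    have h2 : Tendsto (fun m : ℕ => 1/((m:ℝ)-1)) atTop (𝓝 0) := by
      simpa [one_div, Pi.inv_def] using h1.inv_tendsto_atTop
    have h3 : Tendsto (fun m : ℕ => 1/(m:ℝ)) atTop (𝓝 0) := by
      simpa [one_div, Pi.inv_def] using tnat.inv_tendsto_atTop
    have h4 := h2.add h3
    rw [add_zero] at h4
    exact h4.congr fun m => rfl
  have hquot : Tendsto (fun n : ℕ => (n:ℝ)/((n:ℝ)+1)) atTop (𝓝 1) := by
    have heq : (fun n : ℕ => (n:ℝ)/((n:ℝ)+1)) = fun n : ℕ => 1 - 1/((n:ℝ)+1) := by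
      funext n
      have h3 : ((n:ℝ) + 1) ≠ 0 := by positivity
      field_simp
      ring
    rw [heq]
    have h4 : Tendsto (fun n : ℕ => 1/((n:ℝ)+1)) atTop (𝓝 0) := by
      have h5 := t1.const_mul (1/2 : ℝ)
      simp only [mul_zero] at h5
      refine h5.congr fun N => ?_
      ring
    simpa using tendsto_const_nhds.sub h4
  -- key eventual bound
  have key : ∀ δ : ℝ, 0 < δ → δ ≤ 1 → ∀ᶠ n : ℕ in atTop,
      |(n:ℝ) * (∑' i : ℕ, if n + 1 ≤ i then 2 * b i / ((i:ℝ) * ((i:ℝ) - 1)) else 0) - 2| < δ := by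
    intro δ hδ hδ1
    set ε : ℝ := δ/8 with hεdef
    have hεpos : 0 < ε := by positivity
    have hε1 : ε ≤ 1/8 := by rw [hεdef]; linarith
    obtain ⟨N₀, hN₀⟩ := (Metric.tendsto_atTop.mp hA) ε hεpos
    set M₀ : ℕ := max N₀ 2 with hM₀def
    have hM₀2 : 2 ≤ M₀ := le_max_right _ _
    have hAm : ∀ m : ℕ, M₀ ≤ m → (1-ε) * m ≤ KA b m ∧ KA b m ≤ (1+ε) * m := by
      intro m hm
      have hm1 : 1 ≤ m := le_trans (by omega) hm
      have hm0 : (0:ℝ) < m := by exact_mod_cast Nat.lt_of_lt_of_le Nat.zero_lt_one hm1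
      have h1 : |KA b m / m - 1| < ε := by
        have := hN₀ m (le_trans (le_max_left _ _) hm)
        rw [Real.dist_eq] at this
        exact this
      have h2 := abs_lt.mp h1
      have h3 : KA b m / m * m = KA b m := div_mul_cancel₀ _ (ne_of_gt hm0)
      constructor <;> nlinarith [h2.1, h2.2]
    have heN : ∀ n : ℕ, 1 ≤ n → (n:ℝ) * Ke (n+1) = 1 + (n:ℝ)/((n:ℝ)+1) := by
      intro n hn
      have h1 : (1:ℝ) ≤ (n:ℝ) := by exact_mod_cast hn
      simp only [Ke]
      push_cast
      have h2 : ((n:ℝ)) ≠ 0 := by linarith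
      have h3 : ((n:ℝ) + 1) ≠ 0 := by linarith
      simp only [add_sub_cancel_right]
      field_simp
    -- the two-sided bound on the tail sum, for n ≥ M₀
    have main : ∀ n : ℕ, M₀ ≤ n →
        (-(1+ε) * (2/((n:ℝ)+1)) + (1-ε) * (2 * Ke (n+1)))
          ≤ (∑' i : ℕ, if n + 1 ≤ i then 2 * b i / ((i:ℝ) * ((i:ℝ) - 1)) else 0)
        ∧ (∑' i : ℕ, if n + 1 ≤ i then 2 * b i / ((i:ℝ) * ((i:ℝ) - 1)) else 0)
          ≤ (-(1-ε) * (2/((n:ℝ)+1)) + (1+ε) * (2 * Ke (n+1))) := by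
      intro n hn
      set g : ℕ → ℝ := fun i => if n + 1 ≤ i then 2 * b i / ((i:ℝ) * ((i:ℝ) - 1)) else 0
        with hgdef
      have hn2 : 2 ≤ n := le_trans hM₀2 hn
      have hgc : ∀ i, g i = if n + 1 ≤ i then Kc i * b i else 0 := by
        intro i
        simp only [hgdef, Kc]
        split
        · ring
        · rfl
      have hg0 : ∀ i, 0 ≤ g i := by
        intro i
        rw [hgc]
        split
        · exact mul_nonneg (hc0 i) (hb i)
        · exact le_refl 0
      have hgsum : ∀ N, n ≤ N →
          ∑ i ∈ Finset.range (N+1), g i = ∑ i ∈ Finset.Ioc n N, Kc i * b i := by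
        intro N hN
        rw [Finset.sum_congr rfl (fun i _ => hgc i), Finset.sum_ite, Finset.sum_const_zero,
          add_zero]
        apply Finset.sum_congr _ (fun i _ => rfl)
        ext i
        simp only [Finset.mem_filter, Finset.mem_range, Finset.mem_Ioc]
        omega
      have hPU : ∀ N, n ≤ N → ∑ i ∈ Finset.Ioc n N, Kc i * b i
          ≤ (1+ε) * (2/((N:ℝ)+1)) - (1-ε) * (2/((n:ℝ)+1))
            + (1+ε) * (2 * (Ke (n+1) - Ke (N+1))) := by
        intro N hN
        have hN1 : 1 ≤ N := le_trans (by omega) hN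
        rw [habel n N hN]
        have h1 : Kc (N+1) * KA b N ≤ (1+ε) * (2/((N:ℝ)+1)) := by
          have hA' := (hAm N (le_trans hn hN)).2
          calc Kc (N+1) * KA b N ≤ Kc (N+1) * ((1+ε) * N) :=
                mul_le_mul_of_nonneg_left hA' (hc0 (N+1))
            _ = (1+ε) * (Kc (N+1) * N) := by ring
            _ = (1+ε) * (2/((N:ℝ)+1)) := by rw [hcN N hN1]
        have h2 : (1-ε) * (2/((n:ℝ)+1)) ≤ Kc (n+1) * KA b n := by
          have hA' := (hAm n hn).1
          have hn1 : 1 ≤ n := by omega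
          calc (1-ε) * (2/((n:ℝ)+1)) = (1-ε) * (Kc (n+1) * n) := by rw [hcN n hn1]
            _ = Kc (n+1) * ((1-ε) * n) := by ring
            _ ≤ Kc (n+1) * KA b n := mul_le_mul_of_nonneg_left hA' (hc0 (n+1))
        have h3 : ∑ i ∈ Finset.Ioc n N, (Kc i - Kc (i+1)) * KA b i
            ≤ (1+ε) * (2 * (Ke (n+1) - Ke (N+1))) := by
          rw [← htel n N hN, Finset.mul_sum]
          refine Finset.sum_le_sum fun i hi => ?_
          obtain ⟨hi1, hi2⟩ := Finset.mem_Ioc.mp hi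
          have hi2' : 2 ≤ i := by omega
          have hiM : M₀ ≤ i := by omega
          have hA' := (hAm i hiM).2
          calc (Kc i - Kc (i+1)) * KA b i ≤ (Kc i - Kc (i+1)) * ((1+ε)*i) :=
                mul_le_mul_of_nonneg_left hA' (hd0 i hi2')
            _ = (1+ε) * ((Kc i - Kc (i+1)) * i) := by ring
            _ = (1+ε) * (2 * (Ke i - Ke (i+1))) := by rw [hdi i hi2']
        linarith
      have hPL : ∀ N, n ≤ N → -((1+ε) * (2/((n:ℝ)+1))) + (1-ε) * (2 * (Ke (n+1) - Ke (N+1)))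
          ≤ ∑ i ∈ Finset.Ioc n N, Kc i * b i := by
        intro N hN
        rw [habel n N hN]
        have h1 : 0 ≤ Kc (N+1) * KA b N := mul_nonneg (hc0 _) (hA0 _)
        have h2 : Kc (n+1) * KA b n ≤ (1+ε) * (2/((n:ℝ)+1)) := by
          have hA' := (hAm n hn).2
          have hn1 : 1 ≤ n := by omega
          calc Kc (n+1) * KA b n ≤ Kc (n+1) * ((1+ε) * n) :=
                mul_le_mul_of_nonneg_left hA' (hc0 (n+1))
            _ = (1+ε) * (Kc (n+1) * n) := by ring
            _ = (1+ε) * (2/((n:ℝ)+1)) := by rw [hcN n hn1]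
        have h3 : (1-ε) * (2 * (Ke (n+1) - Ke (N+1)))
            ≤ ∑ i ∈ Finset.Ioc n N, (Kc i - Kc (i+1)) * KA b i := by
          rw [← htel n N hN, Finset.mul_sum]
          refine Finset.sum_le_sum fun i hi => ?_
          obtain ⟨hi1, hi2⟩ := Finset.mem_Ioc.mp hi
          have hi2' : 2 ≤ i := by omega
          have hiM : M₀ ≤ i := by omega
          have hA' := (hAm i hiM).1
          calc (1-ε) * (2 * (Ke i - Ke (i+1))) = (1-ε) * ((Kc i - Kc (i+1)) * i) := by
                rw [hdi i hi2']
            _ = (Kc i - Kc (i+1)) * ((1-ε)*i) := by ring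
            _ ≤ (Kc i - Kc (i+1)) * KA b i := mul_le_mul_of_nonneg_left hA' (hd0 i hi2')
        linarith
      -- summability
      have hen1 : 0 ≤ Ke (n+1) := he0' (n+1) (by omega)
      have hCval : ∀ M : ℕ, ∑ i ∈ Finset.range M, g i
          ≤ (1+ε) * (2/((n:ℝ)+1)) + (1+ε) * (2 * Ke (n+1)) := by
        intro M
        have hp : (0:ℝ) ≤ 2/((n:ℝ)+1) := by positivity
        have hC0 : (0:ℝ) ≤ (1+ε) * (2/((n:ℝ)+1)) + (1+ε) * (2 * Ke (n+1)) := by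
          have := mul_nonneg (by linarith : (0:ℝ) ≤ 1+ε) hp
          have := mul_nonneg (by linarith : (0:ℝ) ≤ 1+ε) (by linarith : (0:ℝ) ≤ 2 * Ke (n+1))
          linarith
        rcases le_or_gt M (n+1) with hM | hM
        · have hz : ∑ i ∈ Finset.range M, g i = 0 := by
            refine Finset.sum_eq_zero fun i hi => ?_
            rw [hgc i, if_neg]
            have := Finset.mem_range.mp hi
            omega
          rw [hz]; exact hC0
        · obtain ⟨N, rfl⟩ : ∃ N, M = N + 1 := ⟨M-1, by omega⟩
          have hN : n ≤ N := by omega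
          have hbd := hPU N hN
          rw [← hgsum N hN] at hbd
          have hNn : ((n:ℝ)+1) ≤ ((N:ℝ)+1) := by
            have : (n:ℝ) ≤ (N:ℝ) := by exact_mod_cast hN
            linarith
          have e1 : (1+ε) * (2/((N:ℝ)+1)) ≤ (1+ε) * (2/((n:ℝ)+1)) := by
            have h6 : 2/((N:ℝ)+1) ≤ 2/((n:ℝ)+1) :=
              div_le_div_of_nonneg_left (by norm_num) (by positivity) hNn
            exact mul_le_mul_of_nonneg_left h6 (by linarith)
          have e2 : (0:ℝ) ≤ (1-ε) * (2/((n:ℝ)+1)) := mul_nonneg (by linarith) hp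
          have heN1 : 0 ≤ Ke (N+1) := he0' _ (by omega)
          have e3 : (0:ℝ) ≤ (1+ε) * (2 * Ke (N+1)) := mul_nonneg (by linarith) (by linarith)
          have e4 : (1+ε) * (2 * (Ke (n+1) - Ke (N+1)))
              = (1+ε) * (2 * Ke (n+1)) - (1+ε) * (2 * Ke (N+1)) := by ring
          linarith
      have hsum : Summable g := summable_of_sum_range_le hg0 hCval
      have hseq : Tendsto (fun N : ℕ => ∑ i ∈ Finset.range (N+1), g i) atTop
          (𝓝 (∑' i, g i)) :=
        hsum.hasSum.tendsto_sum_nat.comp (tendsto_add_atTop_nat 1)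
      have l2 : Tendsto (fun N : ℕ => Ke (N+1)) atTop (𝓝 0) :=
        te.comp (tendsto_add_atTop_nat 1)
      have hub : (∑' i, g i) ≤ -(1-ε) * (2/((n:ℝ)+1)) + (1+ε) * (2 * Ke (n+1)) := by
        have hUlim : Tendsto (fun N : ℕ => (1+ε) * (2/((N:ℝ)+1)) - (1-ε) * (2/((n:ℝ)+1))
            + (1+ε) * (2 * (Ke (n+1) - Ke (N+1)))) atTop
            (𝓝 (-(1-ε) * (2/((n:ℝ)+1)) + (1+ε) * (2 * Ke (n+1)))) := by
          have l1 := t1.const_mul (1+ε)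
          have lc : Tendsto (fun _ : ℕ => Ke (n+1)) atTop (𝓝 (Ke (n+1))) := tendsto_const_nhds
          have l3 := ((lc.sub l2).const_mul (2:ℝ)).const_mul (1+ε)
          have l4 := (l1.sub (tendsto_const_nhds (x := (1-ε) * (2/((n:ℝ)+1))))).add l3
          have hv : -(1-ε) * (2/((n:ℝ)+1)) + (1+ε) * (2 * Ke (n+1))
              = ((1+ε) * 0 - (1-ε) * (2/((n:ℝ)+1))) + (1+ε) * (2 * (Ke (n+1) - 0)) := by ring
          rw [hv]
          refine l4.congr fun N => ?_
          ring
        refine le_of_tendsto_of_tendsto hseq hUlim ?_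
        filter_upwards [eventually_ge_atTop n] with N hN
        rw [hgsum N hN]
        exact hPU N hN
      have hlb : -(1+ε) * (2/((n:ℝ)+1)) + (1-ε) * (2 * Ke (n+1)) ≤ ∑' i, g i := by
        have hLlim : Tendsto (fun N : ℕ => -((1+ε) * (2/((n:ℝ)+1)))
            + (1-ε) * (2 * (Ke (n+1) - Ke (N+1)))) atTop
            (𝓝 (-(1+ε) * (2/((n:ℝ)+1)) + (1-ε) * (2 * Ke (n+1)))) := by
          have lc : Tendsto (fun _ : ℕ => Ke (n+1)) atTop (𝓝 (Ke (n+1))) := tendsto_const_nhds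
          have l3 := ((lc.sub l2).const_mul (2:ℝ)).const_mul (1-ε)
          have l4 := (tendsto_const_nhds (x := -((1+ε) * (2/((n:ℝ)+1))))).add l3
          have hv : -(1+ε) * (2/((n:ℝ)+1)) + (1-ε) * (2 * Ke (n+1))
              = -((1+ε) * (2/((n:ℝ)+1))) + (1-ε) * (2 * (Ke (n+1) - 0)) := by ring
          rw [hv]
          refine l4.congr fun N => ?_
          ring
        refine le_of_tendsto hLlim ?_
        filter_upwards [eventually_ge_atTop n] with N hN
        calc -((1+ε) * (2/((n:ℝ)+1))) + (1-ε) * (2 * (Ke (n+1) - Ke (N+1)))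
            ≤ ∑ i ∈ Finset.Ioc n N, Kc i * b i := hPL N hN
          _ = ∑ i ∈ Finset.range (N+1), g i := (hgsum N hN).symm
          _ ≤ ∑' i, g i := Summable.sum_le_tsum _ (fun i _ => hg0 i) hsum
      exact ⟨by simpa using hlb, by simpa using hub⟩
    -- limits of the scaled bounds
    have hUt : Tendsto (fun n : ℕ =>
        (n:ℝ) * (-(1-ε) * (2/((n:ℝ)+1)) + (1+ε) * (2 * Ke (n+1)))) atTop (𝓝 (2 + 6*ε)) := by
      have lc1 : Tendsto (fun _ : ℕ => (1:ℝ)) atTop (𝓝 1) := tendsto_const_nhds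
      have base := (hquot.const_mul (-(1-ε)*2)).add ((lc1.add hquot).const_mul ((1+ε)*2))
      have hval : (2 + 6*ε : ℝ) = (-(1-ε)*2) * 1 + ((1+ε)*2) * (1 + 1) := by ring
      rw [hval]
      refine base.congr' ?_
      filter_upwards [eventually_ge_atTop 1] with n hn
      have h1 := heN n hn
      have h2 : (n:ℝ) * (2/((n:ℝ)+1)) = 2 * ((n:ℝ)/((n:ℝ)+1)) := by ring
      calc (-(1-ε)*2) * ((n:ℝ)/((n:ℝ)+1)) + ((1+ε)*2) * (1 + (n:ℝ)/((n:ℝ)+1))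
          = -(1-ε) * ((n:ℝ) * (2/((n:ℝ)+1))) + (1+ε) * (2 * ((n:ℝ) * Ke (n+1))) := by
            rw [h1, h2]; ring
        _ = (n:ℝ) * (-(1-ε) * (2/((n:ℝ)+1)) + (1+ε) * (2 * Ke (n+1))) := by ring
    have hLt : Tendsto (fun n : ℕ =>
        (n:ℝ) * (-(1+ε) * (2/((n:ℝ)+1)) + (1-ε) * (2 * Ke (n+1)))) atTop (𝓝 (2 - 6*ε)) := by
      have lc1 : Tendsto (fun _ : ℕ => (1:ℝ)) atTop (𝓝 1) := tendsto_const_nhds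
      have base := (hquot.const_mul (-(1+ε)*2)).add ((lc1.add hquot).const_mul ((1-ε)*2))
      have hval : (2 - 6*ε : ℝ) = (-(1+ε)*2) * 1 + ((1-ε)*2) * (1 + 1) := by ring
      rw [hval]
      refine base.congr' ?_
      filter_upwards [eventually_ge_atTop 1] with n hn
      have h1 := heN n hn
      have h2 : (n:ℝ) * (2/((n:ℝ)+1)) = 2 * ((n:ℝ)/((n:ℝ)+1)) := by ring
      calc (-(1+ε)*2) * ((n:ℝ)/((n:ℝ)+1)) + ((1-ε)*2) * (1 + (n:ℝ)/((n:ℝ)+1))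
          = -(1+ε) * ((n:ℝ) * (2/((n:ℝ)+1))) + (1-ε) * (2 * ((n:ℝ) * Ke (n+1))) := by
            rw [h1, h2]; ring
        _ = (n:ℝ) * (-(1+ε) * (2/((n:ℝ)+1)) + (1-ε) * (2 * Ke (n+1))) := by ring
    have evU : ∀ᶠ n : ℕ in atTop,
        (n:ℝ) * (-(1-ε) * (2/((n:ℝ)+1)) + (1+ε) * (2 * Ke (n+1))) < 2 + 7*ε :=
      hUt.eventually (eventually_lt_nhds (by linarith))
    have evL : ∀ᶠ n : ℕ in atTop,
        2 - 7*ε < (n:ℝ) * (-(1+ε) * (2/((n:ℝ)+1)) + (1-ε) * (2 * Ke (n+1))) :=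
      hLt.eventually (eventually_gt_nhds (by linarith))
    filter_upwards [eventually_ge_atTop M₀, evU, evL] with n hn hU hL
    obtain ⟨hlo, hhi⟩ := main n hn
    have hn0 : (0:ℝ) ≤ (n:ℝ) := Nat.cast_nonneg n
    have b1 := mul_le_mul_of_nonneg_left hhi hn0
    have b2 := mul_le_mul_of_nonneg_left hlo hn0
    rw [abs_lt]
    constructor
    · have : -δ < -(7*ε) := by rw [hεdef]; linarith
      linarith
    · have : 7*ε ≤ δ := by rw [hεdef]; linarith
      linarith
  -- conclude
  rw [Metric.tendsto_atTop]
  intro δ hδ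
  obtain ⟨N, hN⟩ := eventually_atTop.mp (key (min δ 1) (lt_min hδ one_pos) (min_le_right _ _))
  refine ⟨N, fun n hn => ?_⟩
  rw [Real.dist_eq]
  exact lt_of_lt_of_le (hN n hn) (min_le_left _ _)


lemma Kquot : Tendsto (fun n : ℕ => (n:ℝ)/((n:ℝ)+1)) atTop (𝓝 1) := by
  have tnat : Tendsto (fun n : ℕ => (n:ℝ)) atTop atTop := tendsto_natCast_atTop_atTop
  have h1 : Tendsto (fun N : ℕ => (N:ℝ) + 1) atTop atTop :=
    tendsto_atTop_add_const_right atTop 1 tnat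
  have h4 : Tendsto (fun n : ℕ => 1/((n:ℝ)+1)) atTop (𝓝 0) := by
    simpa [one_div, Pi.inv_def] using h1.inv_tendsto_atTop
  have heq : (fun n : ℕ => (n:ℝ)/((n:ℝ)+1)) = fun n : ℕ => 1 - 1/((n:ℝ)+1) := by
    funext n
    have h3 : ((n:ℝ) + 1) ≠ 0 := by positivity
    field_simp
    ring
  rw [heq]
  simpa using tendsto_const_nhds.sub h4

/-- Almost surely, `n · T n → 2` as `n → ∞` for the Kingman coalescent times. -/
theorem kingman_Tn_lln
    {Ω : Type*} [MeasurableSpace Ω] (μ : Measure Ω) [IsProbabilityMeasure μ]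
    (S : ℕ → Ω → ℝ)
    (hindep : iIndepFun
      (fun i : {i : ℕ // 2 ≤ i} => S i) μ)
    (hexp : ∀ i : ℕ, 2 ≤ i → μ.map (S i) = expMeasure 1)
    (T : ℕ → Ω → ℝ)
    (hT : ∀ n ω, T n ω
      = ∑' i : ℕ, if n + 1 ≤ i then 2 * S i ω / ((i : ℝ) * ((i : ℝ) - 1)) else 0) :
    ∀ᵐ ω ∂μ, Tendsto (fun n : ℕ => (n : ℝ) * T n ω) atTop (𝓝 2) := by
  have hprob : IsProbabilityMeasure (expMeasure 1) := isProbabilityMeasure_expMeasure one_pos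
  have hmeas : ∀ i : ℕ, 2 ≤ i → AEMeasurable (S i) μ := by
    intro i hi
    by_contra h
    have h0 := Measure.map_of_not_aemeasurable (f := S i) (μ := μ) h
    rw [hexp i hi] at h0
    have h1 : (expMeasure 1) Set.univ = 1 := hprob.measure_univ
    rw [h0] at h1
    simp at h1
  have hnonneg : ∀ᵐ ω ∂μ, ∀ i : ℕ, 2 ≤ i → 0 ≤ S i ω := by
    rw [ae_all_iff]
    intro i
    by_cases hi : 2 ≤ i
    · have h1 : μ (S i ⁻¹' Set.Iio 0) = 0 := by
        rw [← Measure.map_apply_of_aemeasurable (hmeas i hi) measurableSet_Iio, hexp i hi]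
        exact exp_Iio_zero
      have h2 : ∀ᵐ ω ∂μ, ω ∉ S i ⁻¹' Set.Iio 0 := measure_eq_zero_iff_ae_notMem.mp h1
      filter_upwards [h2] with ω hω _
      simpa using not_lt.mp (by simpa [Set.mem_preimage] using hω)
    · exact Filter.Eventually.of_forall fun ω h => absurd h hi
  have hXmeas : ∀ k : ℕ, AEMeasurable (S (k+2)) μ := fun k => hmeas _ (by omega)
  have hident : ∀ k : ℕ, IdentDistrib (S (k+2)) (S (0+2)) μ μ := fun k =>
    ⟨hXmeas k, hXmeas 0, by rw [hexp _ (by omega), hexp _ (by omega)]⟩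
  have hpair : Pairwise (Function.onFun (IndepFun · · μ) (fun k : ℕ => S (k+2))) := by
    intro i j hij
    exact hindep.indepFun (i := ⟨i+2, by omega⟩) (j := ⟨j+2, by omega⟩)
      (by simp [Subtype.ext_iff]; omega)
  have hint : Integrable (S (0+2)) μ := by
    have h1 : Integrable (fun x : ℝ => x) (μ.map (S 2)) := by
      rw [hexp 2 le_rfl]; exact exp_integrable
    have h2 := (integrable_map_measure aestronglyMeasurable_id (hmeas 2 le_rfl)).mp h1
    simpa [Function.comp] using h2
  have hslln := strong_law_ae_real (fun k : ℕ => S (k+2)) hint hpair hident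
  have hmean : (μ[(fun k : ℕ => S (k+2)) 0]) = 1 := by
    show (∫ ω, S (0+2) ω ∂μ) = 1
    have h2 : (∫ x : ℝ, x ∂(μ.map (S 2))) = 1 := by rw [hexp 2 le_rfl]; exact exp_mean
    have h3 := integral_map (φ := S 2) (f := fun x : ℝ => x) (hmeas 2 le_rfl)
      measurable_id.aestronglyMeasurable
    rw [h3] at h2
    exact h2
  rw [hmean] at hslln
  filter_upwards [hnonneg, hslln] with ω hω hsω
  set b : ℕ → ℝ := fun i => if 2 ≤ i then S i ω else 0 with hbdef
  have hb : ∀ i, 0 ≤ b i := by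
    intro i
    simp only [hbdef]
    split
    · exact hω i ‹_›
    · exact le_rfl
  have hkey : ∀ m : ℕ, ∑ i ∈ Finset.range (m+1+1), b i
      = ∑ i ∈ Finset.range m, S (i+2) ω := by
    intro m
    induction m with
    | zero => simp [hbdef, Finset.sum_range_succ]
    | succ m ih =>
      rw [Finset.sum_range_succ b (m+1+1), Finset.sum_range_succ (fun i => S (i+2) ω) m, ih]
      congr 1
  have hA : Tendsto (fun m : ℕ => (∑ i ∈ Finset.range (m+1), b i) / m) atTop (𝓝 1) := by
    rw [← tendsto_add_atTop_iff_nat 1]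
    have heq : (fun m : ℕ => (∑ i ∈ Finset.range (m+1+1), b i) / ((m+1 : ℕ) : ℝ))
        = fun m : ℕ => ((∑ i ∈ Finset.range m, S (i+2) ω) / m) * ((m:ℝ)/((m:ℝ)+1)) := by
      funext m
      rw [hkey m]
      rcases Nat.eq_zero_or_pos m with hm | hm
      · subst hm; simp
      · have hm0 : ((m:ℝ)) ≠ 0 := by
          have : (0:ℝ) < m := by exact_mod_cast hm
          linarith
        have hm1 : ((m:ℝ) + 1) ≠ 0 := by positivity
        push_cast
        field_simp
    have h5 := hsω.mul Kquot
    rw [mul_one] at h5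
    exact heq ▸ h5
  have hdet := det_lemma b hb (by simp [hbdef]) (by simp [hbdef]) hA
  refine hdet.congr' ?_
  filter_upwards [eventually_ge_atTop 1] with n hn
  rw [hT n ω]
  congr 1
  apply tsum_congr
  intro i
  by_cases h : n + 1 ≤ i
  · rw [if_pos h, if_pos h]
    simp only [hbdef]
    rw [if_pos (by omega)]
  · rw [if_neg h, if_neg h]
end
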